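/- arXiv:2311.02969 — 2 statements merged into one kernel-verified Lean document; each statement's English description precedes it below -/
import Mathlib

section
/- Let G be a graph, let H be a subgraph of G, let Q be a cycle in H, and let φ be an (I,F)-coloring of H. Let u1, u2, …, ut be distinct vertices of G not in H such that each ui has at most two neighbors in V(H) ∪ {u1, …, u(i−1)}. Extend φ by nicely coloring u1, u2, …, ut in this order (assign I to ui if none of its already-colored neighbors has color I, and assign F otherwise). Then in the resulting coloring of the subgraph of G induced by V(H) ∪ {u1, …, ut}, every F-cycle is already an F-cycle of φ and every splitting F-path of Q is already a splitting F-path of Q under φ; that is, nicely coloring the sequence creates no new F-cycles and no new splitting F-paths of Q. -/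
open SimpleGraph

namespace IFPaper

variable {V : Type}

/-- An `(I,F)`-coloring of a graph, encoded as a Boolean coloring where
`true` means color `I` and `false` means color `F`:  the `I`-colored vertices
form an independent set and the `F`-colored vertices induce a forest
(no cycle has all of its vertices colored `F`). -/
def IFColoring (G : SimpleGraph V) (c : V → Bool) : Prop :=
  (∀ ⦃u v : V⦄, G.Adj u v → c u = true → c v = false) ∧
  (∀ (v : V) (w : G.Walk v v), w.IsCycle → ¬ (∀ x ∈ w.support, c x = false))

/-- A graph is `(I,F)`-colorable if it admits an `(I,F)`-coloring. -/
def IFColorable (G : SimpleGraph V) : Prop := ∃ c : V → Bool, IFColoring G c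

/-- An `(I,F)`-coloring of the subgraph of `G` induced on the set `S`. -/
def IFColoringOn (G : SimpleGraph V) (S : Set V) (c : V → Bool) : Prop :=
  (∀ ⦃u v : V⦄, u ∈ S → v ∈ S → G.Adj u v → c u = true → c v = false) ∧
  (∀ (v : V) (w : G.Walk v v), w.IsCycle → (∀ x ∈ w.support, x ∈ S) →
    ¬ (∀ x ∈ w.support, c x = false))

/-- A splitting `F`-path of (the vertex set `Q` of) a cycle: a path all of whose
vertices get color `F`, whose two endpoints lie on `Q`, and all of whose other
vertices (at least one) do not lie on `Q`. -/
def IsSplittingFPath (G : SimpleGraph V) (Q : Set V) (c : V → Bool)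
    {a b : V} (p : G.Walk a b) : Prop :=
  p.IsPath ∧ (∀ x ∈ p.support, c x = false) ∧ a ∈ Q ∧ b ∈ Q ∧ 2 ≤ p.length ∧
  ∀ x ∈ p.support, x ≠ a → x ≠ b → x ∉ Q

/-- A super IF-coloring of `(G, Q)`: an `(I,F)`-coloring of `G` with no
splitting `F`-path of `Q`. -/
def SuperIFColoring (G : SimpleGraph V) (Q : Set V) (c : V → Bool) : Prop :=
  IFColoring G c ∧ ∀ (a b : V) (p : G.Walk a b), ¬ IsSplittingFPath G Q c p

/-- `d* ≥ 3`: any two distinct cycles of length at most `5` are at distance at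
least `3`. -/
def Cycles5Apart (G : SimpleGraph V) : Prop :=
  ∀ ⦃u v : V⦄ (c1 : G.Walk u u) (c2 : G.Walk v v),
    c1.IsCycle → c2.IsCycle → c1.length ≤ 5 → c2.length ≤ 5 →
    {e : Sym2 V | e ∈ c1.edges} ≠ {e : Sym2 V | e ∈ c2.edges} →
    ∀ x ∈ c1.support, ∀ y ∈ c2.support, 3 ≤ G.dist x y

/-- A claw of the cycle `C`: a vertex not on `C` with three neighbors on `C`. -/
def HasClaw (G : SimpleGraph V) {v : V} (C : G.Walk v v) : Prop :=
  ∃ x : V, x ∉ C.support ∧ ∃ a b c : V, a ∈ C.support ∧ b ∈ C.support ∧ c ∈ C.support ∧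
    a ≠ b ∧ a ≠ c ∧ b ≠ c ∧ G.Adj x a ∧ G.Adj x b ∧ G.Adj x c

/-- A triclaw of the cycle `C`: a triangle `x y z` disjoint from `C`, joined by
three edges to three distinct vertices of `C`. -/
def HasTriclaw (G : SimpleGraph V) {v : V} (C : G.Walk v v) : Prop :=
  ∃ x y z : V, x ∉ C.support ∧ y ∉ C.support ∧ z ∉ C.support ∧
    G.Adj x y ∧ G.Adj y z ∧ G.Adj x z ∧
    ∃ a b c : V, a ∈ C.support ∧ b ∈ C.support ∧ c ∈ C.support ∧
      a ≠ b ∧ a ≠ c ∧ b ≠ c ∧ G.Adj x a ∧ G.Adj y b ∧ G.Adj z c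

/-- A bad cycle is a `9`-cycle having a claw or a triclaw. -/
def IsBadCycle (G : SimpleGraph V) {v : V} (C : G.Walk v v) : Prop :=
  C.IsCycle ∧ C.length = 9 ∧ (HasClaw G C ∨ HasTriclaw G C)

/-- A good cycle is a cycle that is not bad. -/
def IsGoodCycle (G : SimpleGraph V) {v : V} (C : G.Walk v v) : Prop :=
  C.IsCycle ∧ ¬ IsBadCycle G C

/-- The interior of an arc parametrized by `[0,1]`. -/
def ArcInterior (γ : ℝ → ℝ × ℝ) : Set (ℝ × ℝ) := γ '' Set.Ioo 0 1

/-- The image of an arc parametrized by `[0,1]`. -/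
def ArcImage (γ : ℝ → ℝ × ℝ) : Set (ℝ × ℝ) := γ '' Set.Icc 0 1

/-- A plane embedding of a simple graph: an injective placement of the vertices
in the plane together with, for every edge, a simple arc joining the images of
its endpoints, such that arcs meet only at common endpoints and no arc passes
through a vertex. -/
structure IsPlaneEmbedding (G : SimpleGraph V) (vtx : V → ℝ × ℝ)
    (arc : V → V → ℝ → ℝ × ℝ) : Prop where
  vtx_inj : Function.Injective vtx
  arc_cont : ∀ ⦃u v : V⦄, G.Adj u v → ContinuousOn (arc u v) (Set.Icc 0 1)
  arc_injOn : ∀ ⦃u v : V⦄, G.Adj u v → Set.InjOn (arc u v) (Set.Icc 0 1)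
  arc_start : ∀ ⦃u v : V⦄, G.Adj u v → arc u v 0 = vtx u
  arc_end : ∀ ⦃u v : V⦄, G.Adj u v → arc u v 1 = vtx v
  arc_symm : ∀ ⦃u v : V⦄, G.Adj u v → ∀ t : ℝ, arc v u t = arc u v (1 - t)
  arc_avoids_vtx : ∀ ⦃u v : V⦄, G.Adj u v → ∀ w : V, vtx w ∉ ArcInterior (arc u v)
  arc_disjoint : ∀ ⦃u v u' v' : V⦄, G.Adj u v → G.Adj u' v' → s(u, v) ≠ s(u', v') →
    ArcInterior (arc u v) ∩ ArcInterior (arc u' v') = ∅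

/-- A graph is planar if it admits a plane embedding. -/
def IsPlanarGraph (G : SimpleGraph V) : Prop :=
  ∃ (vtx : V → ℝ × ℝ) (arc : V → V → ℝ → ℝ × ℝ), IsPlaneEmbedding G vtx arc

/-- The subset of the plane covered by a plane drawing of `G`. -/
def Drawing (G : SimpleGraph V) (vtx : V → ℝ × ℝ) (arc : V → V → ℝ → ℝ × ℝ) :
    Set (ℝ × ℝ) :=
  Set.range vtx ∪ ⋃ (u : V) (v : V) (_ : G.Adj u v), ArcImage (arc u v)

/-- The subset of the plane covered by the drawing of a walk `w`. -/
def WalkDrawing (G : SimpleGraph V) (arc : V → V → ℝ → ℝ × ℝ)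
    {a b : V} (w : G.Walk a b) : Set (ℝ × ℝ) :=
  ⋃ (u : V) (v : V) (_ : G.Adj u v) (_ : s(u, v) ∈ w.edges), ArcImage (arc u v)

/-- A face of a plane drawing: a connected component of the complement of the
drawing. -/
def IsFace (G : SimpleGraph V) (vtx : V → ℝ × ℝ) (arc : V → V → ℝ → ℝ × ℝ)
    (f : Set (ℝ × ℝ)) : Prop :=
  ∃ p : ℝ × ℝ, p ∉ Drawing G vtx arc ∧
    f = connectedComponentIn (Drawing G vtx arc)ᶜ p

/-- The outer face: the unbounded face. -/
def IsOuterFace (G : SimpleGraph V) (vtx : V → ℝ × ℝ) (arc : V → V → ℝ → ℝ × ℝ)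
    (f : Set (ℝ × ℝ)) : Prop :=
  IsFace G vtx arc f ∧ ¬ Bornology.IsBounded f

/-- A vertex is on a face if its image lies on the boundary of the face. -/
def VertexOnFace (vtx : V → ℝ × ℝ) (f : Set (ℝ × ℝ)) (v : V) : Prop :=
  vtx v ∈ frontier f

/-- The face `f` is bounded by the (closed) walk `w`. -/
def FaceBoundedBy (G : SimpleGraph V) (vtx : V → ℝ × ℝ) (arc : V → V → ℝ → ℝ × ℝ)
    (f : Set (ℝ × ℝ)) {a : V} (w : G.Walk a a) : Prop :=
  IsFace G vtx arc f ∧ frontier f = WalkDrawing G arc w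

/-- A vertex lies (strictly) inside the cycle `C` of the plane graph. -/
def VertexInsideCycle (G : SimpleGraph V) (vtx : V → ℝ × ℝ)
    (arc : V → V → ℝ → ℝ × ℝ) {a : V} (C : G.Walk a a) (v : V) : Prop :=
  vtx v ∉ WalkDrawing G arc C ∧
  Bornology.IsBounded (connectedComponentIn (WalkDrawing G arc C)ᶜ (vtx v))

/-- A vertex lies (strictly) outside the cycle `C` of the plane graph. -/
def VertexOutsideCycle (G : SimpleGraph V) (vtx : V → ℝ × ℝ)
    (arc : V → V → ℝ → ℝ × ℝ) {a : V} (C : G.Walk a a) (v : V) : Prop :=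
  vtx v ∉ WalkDrawing G arc C ∧
  ¬ Bornology.IsBounded (connectedComponentIn (WalkDrawing G arc C)ᶜ (vtx v))

/-- A cycle of a plane graph is separating if its interior and its exterior
each contain a vertex of the graph. -/
def IsSeparatingCycle (G : SimpleGraph V) (vtx : V → ℝ × ℝ)
    (arc : V → V → ℝ → ℝ × ℝ) {a : V} (C : G.Walk a a) : Prop :=
  (∃ v : V, VertexInsideCycle G vtx arc C v) ∧
  (∃ v : V, VertexOutsideCycle G vtx arc C v)

/-- The cycle `C` has no chord in `G`. -/
def Chordless (G : SimpleGraph V) {a : V} (C : G.Walk a a) : Prop :=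
  ∀ ⦃u v : V⦄, u ∈ C.support → v ∈ C.support → G.Adj u v → s(u, v) ∈ C.edges

/-- The precoloring `c0` of the cycle `C0` extends to a super IF-coloring of
`(G, C0)`. -/
def ExtendsToSuper (G : SimpleGraph V) {v0 : V} (C0 : G.Walk v0 v0)
    (c0 : V → Bool) : Prop :=
  ∃ c : V → Bool, SuperIFColoring G {x | x ∈ C0.support} c ∧
    ∀ x ∈ C0.support, c x = c0 x

/-- A counterexample to the extension theorem: a planar graph with `d* ≥ 3`, a
good cycle `C0` of length at most `9`, and an `(I,F)`-coloring of `G[V(C0)]`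
which does not extend to a super IF-coloring of `(G, C0)`. -/
def IsCounterexample (G : SimpleGraph V) {v0 : V} (C0 : G.Walk v0 v0)
    (c0 : V → Bool) : Prop :=
  IsPlanarGraph G ∧ Cycles5Apart G ∧ IsGoodCycle G C0 ∧ C0.length ≤ 9 ∧
  IFColoringOn G {x | x ∈ C0.support} c0 ∧ ¬ ExtendsToSuper G C0 c0

/-- The quantity `|V(G)| + |E(G)|`. -/
noncomputable def graphSize {V : Type} [Fintype V] (G : SimpleGraph V) : ℕ :=
  Fintype.card V + G.edgeSet.ncard

/-- A minimal counterexample to the extension theorem: one minimizing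
`|V(G)| + |E(G)|` among all counterexamples. -/
def IsMinimalCounterexample [Fintype V] (G : SimpleGraph V) {v0 : V}
    (C0 : G.Walk v0 v0) (c0 : V → Bool) : Prop :=
  IsCounterexample G C0 c0 ∧
  ∀ (n : ℕ) (G' : SimpleGraph (Fin n)) (v0' : Fin n) (C0' : G'.Walk v0' v0')
    (c0' : Fin n → Bool), IsCounterexample G' C0' c0' →
      graphSize G ≤ graphSize G'

/-- A chord of the cycle `C` splitting it into two cycles of lengths `l1` and
`l2`: an edge between two non-consecutive vertices of `C` together with two
cycles of lengths `l1` and `l2` which both use the chord, use otherwise only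
edges of `C`, and together partition the edges of `C`. -/
def HasChordSplit (G : SimpleGraph V) {a : V} (C : G.Walk a a) (l1 l2 : ℕ) : Prop :=
  ∃ u v : V, u ∈ C.support ∧ v ∈ C.support ∧ G.Adj u v ∧ s(u, v) ∉ C.edges ∧
    ∃ (c1 c2 : G.Walk u u), c1.IsCycle ∧ c2.IsCycle ∧
      c1.length = l1 ∧ c2.length = l2 ∧
      s(u, v) ∈ c1.edges ∧ s(u, v) ∈ c2.edges ∧
      (∀ e ∈ c1.edges, e ≠ s(u, v) → e ∈ C.edges) ∧
      (∀ e ∈ c2.edges, e ≠ s(u, v) → e ∈ C.edges) ∧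
      (∀ e ∈ C.edges, (e ∈ c1.edges ↔ e ∉ c2.edges))

/-- A `(l1, l2, l3)`-claw of the cycle `C`: a claw which together with `C`
forms three cycles of lengths `l1`, `l2` and `l3`. -/
def HasClawSplit (G : SimpleGraph V) {a : V} (C : G.Walk a a) (l1 l2 l3 : ℕ) : Prop :=
  ∃ x : V, x ∉ C.support ∧ ∃ v1 v2 v3 : V,
    v1 ∈ C.support ∧ v2 ∈ C.support ∧ v3 ∈ C.support ∧
    v1 ≠ v2 ∧ v1 ≠ v3 ∧ v2 ≠ v3 ∧ G.Adj x v1 ∧ G.Adj x v2 ∧ G.Adj x v3 ∧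
    ∃ (w1 w2 w3 : G.Walk x x), w1.IsCycle ∧ w2.IsCycle ∧ w3.IsCycle ∧
      w1.length = l1 ∧ w2.length = l2 ∧ w3.length = l3 ∧
      (∀ e ∈ w1.edges, e ∈ C.edges ∨ e = s(x, v1) ∨ e = s(x, v2) ∨ e = s(x, v3)) ∧
      (∀ e ∈ w2.edges, e ∈ C.edges ∨ e = s(x, v1) ∨ e = s(x, v2) ∨ e = s(x, v3)) ∧
      (∀ e ∈ w3.edges, e ∈ C.edges ∨ e = s(x, v1) ∨ e = s(x, v2) ∨ e = s(x, v3)) ∧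
      (∀ e ∈ C.edges, (e ∈ w1.edges ∧ e ∉ w2.edges ∧ e ∉ w3.edges) ∨
        (e ∉ w1.edges ∧ e ∈ w2.edges ∧ e ∉ w3.edges) ∨
        (e ∉ w1.edges ∧ e ∉ w2.edges ∧ e ∈ w3.edges))

/-- A special `9`-cycle: a `9`-cycle having a `(3,8)`-chord or a
`(5,5,5)`-claw. -/
def IsSpecial9Cycle (G : SimpleGraph V) {a : V} (C : G.Walk a a) : Prop :=
  C.IsCycle ∧ C.length = 9 ∧ (HasChordSplit G C 3 8 ∨ HasClawSplit G C 5 5 5)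

/-- Two cycles are normally adjacent if they share exactly one edge and
exactly two vertices. -/
def NormallyAdjacent (G : SimpleGraph V) {a b : V}
    (c1 : G.Walk a a) (c2 : G.Walk b b) : Prop :=
  (∃ e : Sym2 V, {e' : Sym2 V | e' ∈ c1.edges} ∩ {e' : Sym2 V | e' ∈ c2.edges} = {e}) ∧
  (∃ x y : V, x ≠ y ∧ {z : V | z ∈ c1.support} ∩ {z : V | z ∈ c2.support} = {x, y})

/-- A `3`-fold cover `(H, L)` of `G`. -/
def IsDPCover (G : SimpleGraph V) {W : Type} (H : SimpleGraph W)
    (L : V → Finset W) : Prop :=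
  (∀ v : V, (L v).card = 3) ∧
  (∀ ⦃u v : V⦄, u ≠ v → Disjoint (L u) (L v)) ∧
  (∀ v : V, ∀ a ∈ L v, ∀ b ∈ L v, ¬ H.Adj a b) ∧
  (∀ ⦃a b : W⦄, H.Adj a b → ∃ u v : V, G.Adj u v ∧ a ∈ L u ∧ b ∈ L v) ∧
  (∀ ⦃u v : V⦄, u ≠ v → ∀ a ∈ L u, ∀ b ∈ L v, ∀ b' ∈ L v,
    H.Adj a b → H.Adj a b' → b = b')

/-- `G` is DP-`3`-colorable: for every `3`-fold cover `(H, L)` of `G` there is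
an independent transversal picking one vertex from each fiber. -/
def DP3Colorable (G : SimpleGraph V) : Prop :=
  ∀ (W : Type) (H : SimpleGraph W) (L : V → Finset W), IsDPCover G H L →
    ∃ f : V → W, (∀ v : V, f v ∈ L v) ∧ ∀ u v : V, ¬ H.Adj (f u) (f v)



lemma aux_getVert_mem_support {V : Type} {G : SimpleGraph V} {a b : V} (p : G.Walk a b)
    {n : ℕ} (hn : n ≤ p.length) : p.getVert n ∈ p.support :=
  Walk.mem_support_iff_exists_getVert.mpr ⟨n, rfl, hn⟩

lemma aux_getVert_inj {V : Type} {G : SimpleGraph V} {a b : V} (p : G.Walk a b)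
    (hp : p.IsPath) : ∀ i j : ℕ, i ≤ p.length → j ≤ p.length →
      p.getVert i = p.getVert j → i = j := by
  induction p with
  | nil => intro i j hi hj _; simp at hi hj; omega
  | cons h q ih =>
    rw [Walk.cons_isPath_iff] at hp
    intro i j hi hj hij
    simp only [Walk.length_cons] at hi hj
    match i, j with
    | 0, 0 => rfl
    | 0, j + 1 =>
      exfalso
      rw [Walk.getVert_zero, Walk.getVert_cons_succ] at hij
      exact hp.2 (hij ▸ aux_getVert_mem_support q (by omega))
    | i + 1, 0 =>
      exfalso
      rw [Walk.getVert_zero, Walk.getVert_cons_succ] at hij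
      exact hp.2 (hij ▸ aux_getVert_mem_support q (by omega))
    | i + 1, j + 1 =>
      rw [Walk.getVert_cons_succ, Walk.getVert_cons_succ] at hij
      have := ih hp.1 i j (by omega) (by omega) hij
      omega

lemma aux_edge_mem {V : Type} {G : SimpleGraph V} {a b : V} (w : G.Walk a b) {i : ℕ}
    (hi : i < w.length) : s(w.getVert i, w.getVert (i + 1)) ∈ w.edges := by
  have := w.toSubgraph_adj_getVert hi
  exact w.mem_edges_toSubgraph.mp (Subgraph.mem_edgeSet.mpr this)

lemma aux_path_nbrs {V : Type} {G : SimpleGraph V} {a b x : V} (p : G.Walk a b)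
    (hp : p.IsPath) (hx : x ∈ p.support) (hxa : x ≠ a) (hxb : x ≠ b) :
    ∃ y z : V, y ≠ z ∧ s(x, y) ∈ p.edges ∧ s(x, z) ∈ p.edges := by
  obtain ⟨i, hiv, hi⟩ := Walk.mem_support_iff_exists_getVert.mp hx
  have h0 : i ≠ 0 := by rintro rfl; exact hxa (by simpa using hiv.symm)
  have hl : i ≠ p.length := by rintro rfl; exact hxb (by simpa [Walk.getVert_length] using hiv.symm)
  refine ⟨p.getVert (i - 1), p.getVert (i + 1), ?_, ?_, ?_⟩
  · intro h
    have := aux_getVert_inj p hp (i - 1) (i + 1) (by omega) (by omega) h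
    omega
  · have := aux_edge_mem p (i := i - 1) (by omega)
    rw [show i - 1 + 1 = i from by omega, hiv] at this
    rwa [Sym2.eq_swap]
  · have := aux_edge_mem p (i := i) (by omega)
    rwa [hiv] at this

lemma aux_cycle_start_nbrs {V : Type} {G : SimpleGraph V} {x : V} (c : G.Walk x x)
    (hc : c.IsCycle) : ∃ y z : V, y ≠ z ∧ s(x, y) ∈ c.edges ∧ s(x, z) ∈ c.edges := by
  have hlen := hc.three_le_length
  match c with
  | .cons (v := y) h q =>
    rw [Walk.cons_isCycle_iff] at hc
    simp only [Walk.length_cons] at hlen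
    have hq2 : 2 ≤ q.length := by omega
    refine ⟨y, q.getVert (q.length - 1), ?_, ?_, ?_⟩
    · intro hcon
      have h0 : q.getVert 0 = q.getVert (q.length - 1) := by
        rw [Walk.getVert_zero]; exact hcon
      have := aux_getVert_inj q hc.1 0 (q.length - 1) (by omega) (by omega) h0
      omega
    · simp
    · have := aux_edge_mem q (i := q.length - 1) (by omega)
      rw [show q.length - 1 + 1 = q.length from by omega, Walk.getVert_length] at this
      rw [Sym2.eq_swap]
      simp [this]

lemma aux_cycle_nbrs {V : Type} [DecidableEq V] {G : SimpleGraph V} {a x : V} (c : G.Walk a a)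
    (hc : c.IsCycle) (hx : x ∈ c.support) :
    ∃ y z : V, y ≠ z ∧ s(x, y) ∈ c.edges ∧ s(x, z) ∈ c.edges := by
  obtain ⟨y, z, hyz, hy, hz⟩ := aux_cycle_start_nbrs (c.rotate x hx) (hc.rotate hx)
  exact ⟨y, z, hyz, (c.rotate_edges x hx).mem_iff.mp hy, (c.rotate_edges x hx).mem_iff.mp hz⟩

lemma aux_no_u {V : Type} {G : SimpleGraph V} {H : G.Subgraph} {t : ℕ} {u : Fin t → V}
    {c' : V → Bool}
    (hdeg : ∀ i : Fin t,
      ((H.verts ∪ {x : V | ∃ j : Fin t, j < i ∧ x = u j}) ∩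
        G.neighborSet (u i)).encard ≤ 2)
    (hnice : ∀ i : Fin t, (c' (u i) = true ↔
      ∀ x ∈ (H.verts ∪ {x : V | ∃ j : Fin t, j < i ∧ x = u j}) ∩
        G.neighborSet (u i), c' x = false))
    {a b : V} (w : G.Walk a b)
    (hmem : ∀ x ∈ w.support, x ∈ H.verts ∪ Set.range u)
    (hF : ∀ x ∈ w.support, c' x = false)
    (hnbrs : ∀ i : Fin t, u i ∈ w.support → ∃ y z : V, y ≠ z ∧ y ∈ w.support ∧
      z ∈ w.support ∧ G.Adj (u i) y ∧ G.Adj (u i) z) :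
    ∀ i : Fin t, u i ∉ w.support := by
  classical
  by_contra hcon
  push_neg at hcon
  obtain ⟨i0, hi0⟩ := hcon
  set F : Finset (Fin t) := Finset.univ.filter (fun i => u i ∈ w.support) with hFdef
  have hne : F.Nonempty := ⟨i0, by simp [hFdef, hi0]⟩
  set i := F.max' hne with hidef
  have hiw : u i ∈ w.support := by
    have := F.max'_mem hne
    simpa [hFdef] using this
  obtain ⟨y, z, hyz, hyw, hzw, hay, haz⟩ := hnbrs i hiw
  set E : Set V := (H.verts ∪ {x : V | ∃ j : Fin t, j < i ∧ x = u j}) ∩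
    G.neighborSet (u i) with hEdef
  have hmemE : ∀ v : V, v ∈ w.support → G.Adj (u i) v → v ∈ E := by
    intro v hvw hadj
    refine ⟨?_, hadj⟩
    rcases hmem v hvw with hv | ⟨j, rfl⟩
    · exact Or.inl hv
    · refine Or.inr ⟨j, ?_, rfl⟩
      have hjF : j ∈ F := by simp [hFdef, hvw]
      have hle : j ≤ i := F.le_max' j hjF
      have hne' : j ≠ i := by rintro rfl; exact hadj.ne rfl
      exact lt_of_le_of_ne hle hne'
  have hyE : y ∈ E := hmemE y hyw hay
  have hzE : z ∈ E := hmemE z hzw haz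
  have hEeq : ({y, z} : Set V) = E := by
    refine Set.Finite.eq_of_subset_of_encard_le (Set.toFinite _) ?_ ?_
    · intro x hx; rcases hx with rfl | rfl; exacts [hyE, hzE]
    · rw [Set.encard_pair hyz]; exact hdeg i
  have hci : c' (u i) = false := hF _ hiw
  have hnall : ¬ ∀ x ∈ E, c' x = false := by
    intro hall
    have := (hnice i).mpr hall
    rw [hci] at this; exact Bool.false_ne_true this
  push_neg at hnall
  obtain ⟨x, hxE, hxne⟩ := hnall
  rw [← hEeq] at hxE
  rcases hxE with rfl | rfl
  · exact hxne (hF _ hyw)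
  · exact hxne (hF _ hzw)

/-- (Nice-coloring proposition.) Let `H` be a subgraph of `G`,
`Q` a cycle in `H`, and `φ` an `(I,F)`-coloring of `H`.  If `u 0, …, u (t-1)`
are distinct vertices outside `H`, each having at most two neighbors among
`V(H)` and the earlier `u j`'s, then nicely coloring them in order (color `I`
iff no already-colored neighbor has color `I`) creates no new `F`-cycle and no
new splitting `F`-path of `Q`: in the resulting coloring `c'` of the subgraph
induced by `V(H) ∪ {u 0, …, u (t-1)}`, every `F`-cycle lies in `H.verts` and is
an `F`-cycle of `φ`, and every splitting `F`-path of `Q` lies in `H.verts` and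
is a splitting `F`-path of `Q` under `φ`. -/
theorem nice_coloring_no_new_barriers {V : Type} (G : SimpleGraph V)
    (H : G.Subgraph) (φ : V → Bool)
    -- `φ` is an (I,F)-coloring of `H`:
    (hφI : ∀ ⦃u v : V⦄, H.Adj u v → φ u = true → φ v = false)
    (hφF : ∀ (a : V) (w : G.Walk a a), w.IsCycle →
      (∀ e ∈ w.edges, e ∈ H.edgeSet) → ¬ (∀ x ∈ w.support, φ x = false))
    -- `Q` is a cycle in `H`:
    {q : V} (Q : G.Walk q q) (hQ : Q.IsCycle)
    (hQH : ∀ e ∈ Q.edges, e ∈ H.edgeSet)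
    -- the sequence `u 0, …, u (t-1)` of distinct vertices of `G` not in `H`:
    (t : ℕ) (u : Fin t → V) (hu_inj : Function.Injective u)
    (hu_notH : ∀ i : Fin t, u i ∉ H.verts)
    -- each `u i` has at most two neighbors among `V(H)` and the earlier `u j`:
    (hdeg : ∀ i : Fin t,
      ((H.verts ∪ {x : V | ∃ j : Fin t, j < i ∧ x = u j}) ∩
        G.neighborSet (u i)).encard ≤ 2)
    -- `c'` is the coloring obtained from `φ` by nicely coloring the sequence:
    (c' : V → Bool)
    (hagree : ∀ x ∈ H.verts, c' x = φ x)
    (hnice : ∀ i : Fin t, (c' (u i) = true ↔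
      ∀ x ∈ (H.verts ∪ {x : V | ∃ j : Fin t, j < i ∧ x = u j}) ∩
        G.neighborSet (u i), c' x = false)) :
    -- no new F-cycles:
    (∀ (a : V) (w : G.Walk a a), w.IsCycle →
      (∀ x ∈ w.support, x ∈ H.verts ∪ Set.range u) →
      (∀ x ∈ w.support, c' x = false) →
      (∀ x ∈ w.support, x ∈ H.verts) ∧ (∀ x ∈ w.support, φ x = false)) ∧
    -- no new splitting F-paths of Q:
    (∀ (a b : V) (p : G.Walk a b),
      (∀ x ∈ p.support, x ∈ H.verts ∪ Set.range u) →
      IsSplittingFPath G {x | x ∈ Q.support} c' p →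
      (∀ x ∈ p.support, x ∈ H.verts) ∧
        IsSplittingFPath G {x | x ∈ Q.support} φ p) := by
  classical
  have hQsub : ∀ x ∈ Q.support, x ∈ H.verts := by
    intro x hx
    obtain ⟨y, z, _, hy, _⟩ := aux_cycle_nbrs Q hQ hx
    exact H.edge_vert (Subgraph.mem_edgeSet.mp (hQH _ hy))
  constructor
  · intro a w hw hmem hF
    have hnbrs : ∀ i : Fin t, u i ∈ w.support → ∃ y z : V, y ≠ z ∧ y ∈ w.support ∧
        z ∈ w.support ∧ G.Adj (u i) y ∧ G.Adj (u i) z := by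
      intro i hi
      obtain ⟨y, z, hyz, hy, hz⟩ := aux_cycle_nbrs w hw hi
      exact ⟨y, z, hyz, w.snd_mem_support_of_mem_edges hy, w.snd_mem_support_of_mem_edges hz,
        w.adj_of_mem_edges hy, w.adj_of_mem_edges hz⟩
    have hnou := aux_no_u hdeg hnice w hmem hF hnbrs
    have hHall : ∀ x ∈ w.support, x ∈ H.verts := by
      intro x hx
      rcases hmem x hx with h | ⟨i, rfl⟩
      · exact h
      · exact absurd hx (hnou i)
    exact ⟨hHall, fun x hx => (hagree x (hHall x hx)).symm.trans (hF x hx)⟩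
  · intro a b p hmem hsp
    obtain ⟨hpath, hFp, haQ, hbQ, hlen, hint⟩ := hsp
    have haH : a ∈ H.verts := hQsub a haQ
    have hbH : b ∈ H.verts := hQsub b hbQ
    have hnbrs : ∀ i : Fin t, u i ∈ p.support → ∃ y z : V, y ≠ z ∧ y ∈ p.support ∧
        z ∈ p.support ∧ G.Adj (u i) y ∧ G.Adj (u i) z := by
      intro i hi
      have hia : u i ≠ a := by rintro h; exact hu_notH i (by rw [h]; exact haH)
      have hib : u i ≠ b := by rintro h; exact hu_notH i (by rw [h]; exact hbH)
      obtain ⟨y, z, hyz, hy, hz⟩ := aux_path_nbrs p hpath hi hia hib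
      exact ⟨y, z, hyz, p.snd_mem_support_of_mem_edges hy, p.snd_mem_support_of_mem_edges hz,
        p.adj_of_mem_edges hy, p.adj_of_mem_edges hz⟩
    have hnou := aux_no_u hdeg hnice p hmem hFp hnbrs
    have hHall : ∀ x ∈ p.support, x ∈ H.verts := by
      intro x hx
      rcases hmem x hx with h | ⟨i, rfl⟩
      · exact h
      · exact absurd hx (hnou i)
    exact ⟨hHall, hpath, fun x hx => (hagree x (hHall x hx)).symm.trans (hFp x hx),
      haQ, hbQ, hlen, hint⟩


end IFPaper
end

section
/- Let (G, C0, φ0) be a minimal counterexample to the extension theorem (minimizing |V(G)| + |E(G)|), with G embedded in the plane so that the chordless cycle C0 bounds the outer face. Then G contains no separating good cycle of length at most 9, where a cycle C of the plane graph G is separating if both the interior and the exterior of C contain at least one vertex of G. -/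
open SimpleGraph

namespace IFPaper

variable {V : Type}

section Restrict

/-- The spanning subgraph of `G` keeping only edges with both ends in `P`. -/
def restrict (G : SimpleGraph V) (P : Set V) : SimpleGraph V where
  Adj x y := G.Adj x y ∧ x ∈ P ∧ y ∈ P
  symm := ⟨fun x y h => ⟨h.1.symm, h.2.2, h.2.1⟩⟩
  loopless := ⟨fun x h => G.loopless.irrefl x h.1⟩

lemma restrict_le (G : SimpleGraph V) (P : Set V) : restrict G P ≤ G := fun {_ _} h => h.1

lemma restrict_adj {G : SimpleGraph V} {P : Set V} {x y : V} :
    (restrict G P).Adj x y ↔ G.Adj x y ∧ x ∈ P ∧ y ∈ P := Iff.rfl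

lemma mem_restrict_edgeSet {G : SimpleGraph V} {P : Set V} {e : Sym2 V} :
    e ∈ (restrict G P).edgeSet → e ∈ G.edgeSet := by
  induction e using Sym2.ind with
  | _ a b => exact fun h => h.1

/-- Any vertex on a walk of `restrict G P` starting in `P` lies in `P`. -/
lemma restrict_walk_support {G : SimpleGraph V} {P : Set V} :
    ∀ {x y : V} (w : (restrict G P).Walk x y), x ∈ P → ∀ z ∈ w.support, z ∈ P := by
  intro x y w
  induction w with
  | nil => intro hx z hz; simp only [Walk.support_nil, List.mem_singleton] at hz; exact hz ▸ hx
  | cons h q ih =>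
    intro hx z hz
    rw [Walk.support_cons, List.mem_cons] at hz
    rcases hz with rfl | hz
    · exact hx
    · exact ih h.2.2 z hz

/-- Every vertex on a non-trivial walk lies on one of its edges. -/
lemma exists_edge_of_mem_support {G : SimpleGraph V} :
    ∀ {u v : V} (p : G.Walk u v), p.length ≠ 0 → ∀ x ∈ p.support, ∃ e ∈ p.edges, x ∈ e := by
  intro u v p
  induction p with
  | nil => intro h; simp at h
  | @cons a b c h q ih =>
    intro _ x hx
    rw [Walk.support_cons, List.mem_cons] at hx
    rcases hx with rfl | hx
    · exact ⟨s(x, b), by simp, by simp⟩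
    · by_cases hq : q.length = 0
      · have : q.Nil := Walk.nil_iff_length_eq.2 hq
        have hxb : x = b := by
          cases q with
          | nil => simpa using hx
          | cons h' q' => exact absurd this Walk.not_nil_cons
        exact ⟨s(a, b), by simp, by simp [hxb]⟩
      · obtain ⟨e, he, hxe⟩ := ih hq x hx
        exact ⟨e, by simp [he], hxe⟩

/-- Every vertex of a cycle of `restrict G P` lies in `P`. -/
lemma restrict_cycle_support {G : SimpleGraph V} {P : Set V} {v : V}
    {w : (restrict G P).Walk v v} (hw : w.IsCycle) : ∀ z ∈ w.support, z ∈ P := by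
  intro z hz
  have hlen : w.length ≠ 0 := by
    have := hw.three_le_length; omega
  obtain ⟨e, he, hze⟩ := exists_edge_of_mem_support w hlen z hz
  induction e using Sym2.ind with
  | _ a b =>
    have hadj := Walk.adj_of_mem_edges w he
    rcases Sym2.mem_iff.1 hze with rfl | rfl
    · exact hadj.2.1
    · exact hadj.2.2

/-- Transfer a walk of `G` whose support lies in `P` to `restrict G P`. -/
lemma edges_mem_restrict {G : SimpleGraph V} {P : Set V} {x y : V} (w : G.Walk x y)
    (hP : ∀ z ∈ w.support, z ∈ P) : ∀ e ∈ w.edges, e ∈ (restrict G P).edgeSet := by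
  intro e he
  induction e using Sym2.ind with
  | _ a b =>
    exact ⟨Walk.adj_of_mem_edges w he, hP a (w.fst_mem_support_of_mem_edges he),
      hP b (w.snd_mem_support_of_mem_edges he)⟩

end Restrict

section Reroute

variable {G : SimpleGraph V} {P B : Set V}

/-- On a walk from outside `P` to a vertex of `P`, there is a strictly shorter
walk from a vertex of `B` (the "boundary") to the same endpoint. -/
lemma first_entry (hbp : ∀ ⦃x y : V⦄, G.Adj x y → x ∉ P → y ∈ P → y ∈ B) :
    ∀ {z y : V} (q : G.Walk z y), z ∉ P → y ∈ P →
      ∃ b, b ∈ B ∧ ∃ q' : G.Walk b y, q'.length < q.length := by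
  intro z y q
  induction q with
  | nil => intro hz hy; exact absurd hy hz
  | @cons a b c h q ih =>
    intro hz hy
    by_cases hb : b ∈ P
    · exact ⟨b, hbp h hz hb, q, by simp⟩
    · obtain ⟨b', hb', q', hq'⟩ := ih hb hy
      exact ⟨b', hb', q', by simpa using Nat.lt_succ_of_lt hq'⟩

/-- Rerouting: if boundary vertices are mutually reachable in `restrict G P`,
then any `G`-walk between vertices of `P` yields reachability in `restrict G P`. -/
lemma reroute (hbp : ∀ ⦃x y : V⦄, G.Adj x y → x ∉ P → y ∈ P → y ∈ B)
    (hB : ∀ a ∈ B, ∀ b ∈ B, (restrict G P).Reachable a b) (hBP : B ⊆ P) :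
    ∀ {x y : V} (w : G.Walk x y), x ∈ P → y ∈ P → (restrict G P).Reachable x y := by
  suffices h : ∀ (n : ℕ) {x y : V} (w : G.Walk x y), w.length ≤ n → x ∈ P → y ∈ P →
      (restrict G P).Reachable x y by
    intro x y w hx hy; exact h w.length w le_rfl hx hy
  intro n
  induction n with
  | zero =>
    intro x y w hw hx hy
    cases w with
    | nil => exact Reachable.refl x
    | cons h q => simp at hw
  | succ n ih =>
    intro x y w hw hx hy
    cases w with
    | nil => exact Reachable.refl x
    | @cons _ z _ h q =>
      by_cases hz : z ∈ P
      · have h1 : (restrict G P).Reachable x z := (restrict_adj.2 ⟨h, hx, hz⟩).reachable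
        have h2 := ih q (by simpa using hw) hz hy
        exact h1.trans h2
      · have hxB : x ∈ B := hbp h.symm hz hx
        obtain ⟨b, hb, q', hq'⟩ := first_entry hbp q hz hy
        have hqn : q.length ≤ n := by simpa using hw
        have h2 := ih q' (by omega) (hBP hb) hy
        exact (hB x hxB b hb).trans h2

/-- Any two vertices on a walk are reachable. -/
lemma reachable_of_mem_support {H : SimpleGraph V} {u : V} {w : H.Walk u u}
    {x y : V} (hx : x ∈ w.support) (hy : y ∈ w.support) : H.Reachable x y := by
  classical
  exact ((w.takeUntil x hx).reverse.reachable).trans (w.takeUntil y hy).reachable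

end Reroute


section MapLe
variable {G H : SimpleGraph V} (hle : G ≤ H)

lemma mapLe_eq_transfer {x y : V} (p : G.Walk x y) :
    p.mapLe hle = p.transfer H (fun e he =>
      (SimpleGraph.edgeSet_subset_edgeSet.2 hle) (p.edges_subset_edgeSet he)) :=
  (Walk.transfer_eq_map_ofLE (p := p) _ hle).symm

lemma mapLe_support {x y : V} (p : G.Walk x y) : (p.mapLe hle).support = p.support := by
  rw [mapLe_eq_transfer hle p, Walk.support_transfer]

lemma mapLe_edges {x y : V} (p : G.Walk x y) : (p.mapLe hle).edges = p.edges := by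
  rw [mapLe_eq_transfer hle p, Walk.edges_transfer]

lemma mapLe_length {x y : V} (p : G.Walk x y) : (p.mapLe hle).length = p.length := by
  rw [mapLe_eq_transfer hle p, Walk.length_transfer]

end MapLe

section C5A
variable {G : SimpleGraph V} {P B : Set V}

lemma c5a_restrict (hG : Cycles5Apart G)
    (hbp : ∀ ⦃x y : V⦄, G.Adj x y → x ∉ P → y ∈ P → y ∈ B)
    (hB : ∀ a ∈ B, ∀ b ∈ B, (restrict G P).Reachable a b) (hBP : B ⊆ P) :
    Cycles5Apart (restrict G P) := by
  intro u v c1 c2 hc1 hc2 hl1 hl2 hne x hx y hy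
  have hle := restrict_le G P
  have h1 : (c1.mapLe hle).IsCycle := hc1.mapLe hle
  have h2 : (c2.mapLe hle).IsCycle := hc2.mapLe hle
  have hGdist : 3 ≤ G.dist x y := by
    refine hG (c1.mapLe hle) (c2.mapLe hle) h1 h2 ?_ ?_ ?_ x ?_ y ?_
    · rw [mapLe_length]; exact hl1
    · rw [mapLe_length]; exact hl2
    · simpa only [mapLe_edges] using hne
    · rw [mapLe_support]; exact hx
    · rw [mapLe_support]; exact hy
  have hxP : x ∈ P := restrict_cycle_support hc1 x hx
  have hyP : y ∈ P := restrict_cycle_support hc2 y hy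
  have hre : G.Reachable x y := by
    have : G.dist x y ≠ 0 := by omega
    exact (SimpleGraph.dist_ne_zero_iff_ne_and_reachable.1 this).2
  obtain ⟨w⟩ := hre
  have hreR : (restrict G P).Reachable x y := reroute hbp hB hBP w hxP hyP
  obtain ⟨w', hw'⟩ := hreR.exists_walk_length_eq_dist
  have : G.dist x y ≤ (restrict G P).dist x y := by
    rw [← hw']
    calc G.dist x y ≤ (w'.mapLe hle).length := SimpleGraph.dist_le _
    _ = w'.length := mapLe_length hle w'
  omega

end C5A

section Topology

variable {G : SimpleGraph V} {vtx : V → ℝ × ℝ} {arc : V → V → ℝ → ℝ × ℝ}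

lemma start_mem_arcImage {u v : V} (hemb : IsPlaneEmbedding G vtx arc) (h : G.Adj u v) :
    vtx u ∈ ArcImage (arc u v) :=
  ⟨0, by norm_num, hemb.arc_start h⟩

lemma end_mem_arcImage {u v : V} (hemb : IsPlaneEmbedding G vtx arc) (h : G.Adj u v) :
    vtx v ∈ ArcImage (arc u v) :=
  ⟨1, by norm_num, hemb.arc_end h⟩

lemma mem_arcImage_cases {u v : V} (hemb : IsPlaneEmbedding G vtx arc) (h : G.Adj u v)
    {p : ℝ × ℝ} (hp : p ∈ ArcImage (arc u v)) :
    p ∈ ArcInterior (arc u v) ∨ p = vtx u ∨ p = vtx v := by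
  obtain ⟨t, ⟨h0, h1⟩, rfl⟩ := hp
  rcases h0.lt_or_eq with h0' | rfl
  · rcases h1.lt_or_eq with h1' | rfl
    · exact Or.inl ⟨t, ⟨h0', h1'⟩, rfl⟩
    · exact Or.inr (Or.inr (hemb.arc_end h))
  · exact Or.inr (Or.inl (hemb.arc_start h))

lemma arcInterior_subset_arcImage {γ : ℝ → ℝ × ℝ} : ArcInterior γ ⊆ ArcImage γ :=
  Set.image_mono Set.Ioo_subset_Icc_self

lemma mem_walkDrawing_iff {a b : V} {w : G.Walk a b} {p : ℝ × ℝ} :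
    p ∈ WalkDrawing G arc w ↔
      ∃ x y, G.Adj x y ∧ s(x, y) ∈ w.edges ∧ p ∈ ArcImage (arc x y) := by
  simp only [WalkDrawing, Set.mem_iUnion]
  tauto

lemma vtx_mem_walkDrawing_of_mem_support (hemb : IsPlaneEmbedding G vtx arc)
    {a : V} {C : G.Walk a a} (hC : C.length ≠ 0) {x : V} (hx : x ∈ C.support) :
    vtx x ∈ WalkDrawing G arc C := by
  obtain ⟨e, he, hxe⟩ := exists_edge_of_mem_support C hC x hx
  induction e using Sym2.ind with
  | _ u v =>
    have hadj : G.Adj u v := C.adj_of_mem_edges he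
    rcases Sym2.mem_iff.1 hxe with rfl | rfl
    · exact mem_walkDrawing_iff.2 ⟨x, v, hadj, he, start_mem_arcImage hemb hadj⟩
    · exact mem_walkDrawing_iff.2 ⟨u, x, hadj, he, end_mem_arcImage hemb hadj⟩

lemma mem_support_of_vtx_mem_walkDrawing (hemb : IsPlaneEmbedding G vtx arc)
    {a b : V} {w : G.Walk a b} {x : V} (hx : vtx x ∈ WalkDrawing G arc w) :
    x ∈ w.support := by
  obtain ⟨u, v, hadj, he, hmem⟩ := mem_walkDrawing_iff.1 hx
  rcases mem_arcImage_cases hemb hadj hmem with hint | h | h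
  · exact absurd hint (hemb.arc_avoids_vtx hadj x)
  · exact (hemb.vtx_inj h) ▸ w.fst_mem_support_of_mem_edges he
  · exact (hemb.vtx_inj h) ▸ w.snd_mem_support_of_mem_edges he

lemma arcImage_disjoint_walkDrawing (hemb : IsPlaneEmbedding G vtx arc)
    {a : V} {C : G.Walk a a} (hC : C.length ≠ 0)
    {u v : V} (huv : G.Adj u v) (hu : u ∉ C.support) (hv : v ∉ C.support) :
    ∀ p ∈ ArcImage (arc u v), p ∉ WalkDrawing G arc C := by
  intro p hpA hpW
  obtain ⟨x, y, hadj, he, hmem⟩ := mem_walkDrawing_iff.1 hpW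
  have hxs : x ∈ C.support := C.fst_mem_support_of_mem_edges he
  have hys : y ∈ C.support := C.snd_mem_support_of_mem_edges he
  have hne : s(u, v) ≠ s(x, y) := by
    intro hEq
    rcases Sym2.eq_iff.1 hEq with ⟨rfl, rfl⟩ | ⟨rfl, rfl⟩
    · exact hu hxs
    · exact hu hys
  rcases mem_arcImage_cases hemb huv hpA with hint | rfl | rfl
  · rcases mem_arcImage_cases hemb hadj hmem with hint' | rfl | rfl
    · have := hemb.arc_disjoint huv hadj hne
      exact absurd (Set.mem_inter hint hint') (by rw [this]; exact fun h => h)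
    · exact (hemb.arc_avoids_vtx huv x) hint
    · exact (hemb.arc_avoids_vtx huv y) hint
  · rcases mem_arcImage_cases hemb hadj hmem with hint' | h | h
    · exact (hemb.arc_avoids_vtx hadj u) hint'
    · exact hu ((hemb.vtx_inj h) ▸ hxs)
    · exact hu ((hemb.vtx_inj h) ▸ hys)
  · rcases mem_arcImage_cases hemb hadj hmem with hint' | h | h
    · exact (hemb.arc_avoids_vtx hadj v) hint'
    · exact hv ((hemb.vtx_inj h) ▸ hxs)
    · exact hv ((hemb.vtx_inj h) ▸ hys)

lemma arcImage_isPreconnected {u v : V} (hemb : IsPlaneEmbedding G vtx arc)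
    (h : G.Adj u v) : IsPreconnected (ArcImage (arc u v)) :=
  isPreconnected_Icc.image _ (hemb.arc_cont h)

/-- The two ends of an edge avoiding a cycle lie in the same component of the
complement of the cycle's drawing. -/
lemma edge_component_eq (hemb : IsPlaneEmbedding G vtx arc)
    {a : V} {C : G.Walk a a} (hC : C.length ≠ 0)
    {u v : V} (huv : G.Adj u v) (hu : u ∉ C.support) (hv : v ∉ C.support) :
    connectedComponentIn (WalkDrawing G arc C)ᶜ (vtx u) =
      connectedComponentIn (WalkDrawing G arc C)ᶜ (vtx v) := by
  have hsub : ArcImage (arc u v) ⊆ (WalkDrawing G arc C)ᶜ :=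
    fun p hp => arcImage_disjoint_walkDrawing hemb hC huv hu hv p hp
  have hconn := arcImage_isPreconnected hemb huv
  have hsubc := hconn.subset_connectedComponentIn (start_mem_arcImage hemb huv) hsub
  exact (connectedComponentIn_eq (hsubc (end_mem_arcImage hemb huv)))

/-- If a vertex is strictly inside a cycle, each of its neighbors is strictly
inside or on the cycle. -/
lemma inside_adj (hemb : IsPlaneEmbedding G vtx arc)
    {a : V} {C : G.Walk a a} (hC : C.length ≠ 0)
    {u v : V} (huv : G.Adj u v) (hu : VertexInsideCycle G vtx arc C u) :
    VertexInsideCycle G vtx arc C v ∨ v ∈ C.support := by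
  by_cases hv : v ∈ C.support
  · exact Or.inr hv
  · left
    have hu' : u ∉ C.support := fun h =>
      hu.1 (vtx_mem_walkDrawing_of_mem_support hemb hC h)
    have hvW : vtx v ∉ WalkDrawing G arc C := fun h =>
      hv (mem_support_of_vtx_mem_walkDrawing hemb h)
    refine ⟨hvW, ?_⟩
    rw [← edge_component_eq hemb hC huv hu' hv]
    exact hu.2

lemma walkDrawing_isClosed [Finite V] (hemb : IsPlaneEmbedding G vtx arc)
    {a b : V} (w : G.Walk a b) : IsClosed (WalkDrawing G arc w) := by
  apply isClosed_iUnion_of_finite; intro u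
  apply isClosed_iUnion_of_finite; intro v
  by_cases h : G.Adj u v
  · by_cases h2 : s(u, v) ∈ w.edges
    · simp only [h, h2, Set.iUnion_true]
      exact (isCompact_Icc.image_of_continuousOn (hemb.arc_cont h)).isClosed
    · simp only [h2, Set.iUnion_false, Set.iUnion_empty]; exact isClosed_empty
  · simp only [h, Set.iUnion_false]; exact isClosed_empty

lemma walkDrawing_subset_drawing {a b : V} {w : G.Walk a b}
    (hw : ∀ e ∈ w.edges, e ∈ G.edgeSet) :
    WalkDrawing G arc w ⊆ Drawing G vtx arc := by
  intro p hp
  obtain ⟨x, y, hadj, he, hmem⟩ := mem_walkDrawing_iff.1 hp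
  exact Or.inr (Set.mem_iUnion.2 ⟨x, Set.mem_iUnion.2 ⟨y, Set.mem_iUnion.2 ⟨hadj, hmem⟩⟩⟩)

/-- No vertex of the outer cycle `C0` is strictly inside any cycle `C`. -/
lemma c0_not_inside [Finite V] (hemb : IsPlaneEmbedding G vtx arc)
    {v0 : V} {C0 : G.Walk v0 v0} (hC0 : C0.length ≠ 0)
    {D : Set (ℝ × ℝ)} (hD : IsOuterFace G vtx arc D)
    (hbound : frontier D = WalkDrawing G arc C0)
    {a : V} (C : G.Walk a a) :
    ∀ x ∈ C0.support, ¬ VertexInsideCycle G vtx arc C x := by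
  intro x hx hins
  obtain ⟨⟨p, hp, hDeq⟩, hDub⟩ := hD
  have hWD : vtx x ∈ WalkDrawing G arc C0 :=
    vtx_mem_walkDrawing_of_mem_support hemb hC0 hx
  have hxW : vtx x ∉ WalkDrawing G arc C := hins.1
  have hDsub : D ⊆ (WalkDrawing G arc C)ᶜ := by
    rw [hDeq]
    refine (connectedComponentIn_subset _ _).trans (Set.compl_subset_compl.2 ?_)
    exact walkDrawing_subset_drawing (fun e he => C.edges_subset_edgeSet he)
  have hDconn : IsConnected D := by
    rw [hDeq]; exact isConnected_connectedComponentIn_iff.2 hp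
  have hop : IsOpen (WalkDrawing G arc C)ᶜ := (walkDrawing_isClosed hemb C).isOpen_compl
  have hclo : vtx x ∈ closure D := frontier_subset_closure (hbound ▸ hWD)
  obtain ⟨ε, hε, hball⟩ := Metric.isOpen_iff.1 hop (vtx x) hxW
  obtain ⟨d, hdD, hd⟩ := Metric.mem_closure_iff.1 hclo ε hε
  have hdball : d ∈ Metric.ball (vtx x) ε := Metric.mem_ball'.mpr hd
  have hballconn : IsConnected (Metric.ball (vtx x) ε) :=
    ⟨⟨vtx x, Metric.mem_ball_self hε⟩, (convex_ball _ _).isPreconnected⟩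
  have hSconn : IsConnected (Metric.ball (vtx x) ε ∪ D) :=
    hballconn.union ⟨d, hdball, hdD⟩ hDconn
  have hSsub : Metric.ball (vtx x) ε ∪ D ⊆ (WalkDrawing G arc C)ᶜ :=
    Set.union_subset hball hDsub
  have hDsubcomp : D ⊆ connectedComponentIn (WalkDrawing G arc C)ᶜ (vtx x) :=
    Set.subset_union_right.trans
      (hSconn.isPreconnected.subset_connectedComponentIn
        (Or.inl (Metric.mem_ball_self hε)) hSsub)
  exact hDub (hins.2.subset hDsubcomp)

end Topology

section Transport

variable {W : Type} {H : SimpleGraph V} {d : W → V}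

/-- The natural homomorphism from a comapped graph. -/
def comapHom (H : SimpleGraph V) (d : W → V) : H.comap d →g H :=
  ⟨d, fun h => h⟩

@[simp] lemma comapHom_apply (i : W) : comapHom H d i = d i := rfl

lemma comap_adj' {i j : W} : (H.comap d).Adj i j ↔ H.Adj (d i) (d j) := Iff.rfl

/-- Lift a walk of `H` along an injective map `d` covering a set `S`
containing all endpoints of edges of `H`. -/
noncomputable def liftWalk (hd : Function.Injective d) {S : Set V}
    (hHS : ∀ ⦃x y : V⦄, H.Adj x y → x ∈ S ∧ y ∈ S)
    (hrange : ∀ x ∈ S, ∃ i : W, d i = x) :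
    ∀ {x y : V} (w : H.Walk x y) {i j : W}, d i = x → d j = y → (H.comap d).Walk i j
  | _, _, Walk.nil, i, _, hi, hj => (Walk.nil : (H.comap d).Walk i i).copy rfl
      (hd (hi.trans hj.symm))
  | _, _, Walk.cons hab w, i, j, hi, hj =>
      Walk.cons
        (show (H.comap d).Adj i (Classical.choose (hrange _ (hHS hab).2)) by
          rw [comap_adj', hi, Classical.choose_spec (hrange _ (hHS hab).2)]
          exact hab)
        (liftWalk hd hHS hrange w (Classical.choose_spec (hrange _ (hHS hab).2)) hj)

variable (hd : Function.Injective d) {S : Set V}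
    (hHS : ∀ ⦃x y : V⦄, H.Adj x y → x ∈ S ∧ y ∈ S)
    (hrange : ∀ x ∈ S, ∃ i : W, d i = x)

lemma liftWalk_support {x y : V} (w : H.Walk x y) {i j : W}
    (hi : d i = x) (hj : d j = y) :
    (liftWalk hd hHS hrange w hi hj).support.map d = w.support := by
  induction w generalizing i j with
  | nil => subst hi; simp [liftWalk]
  | cons hab w ih =>
    subst hi
    simp only [liftWalk, Walk.support_cons, List.map_cons]
    rw [ih]

lemma liftWalk_edges {x y : V} (w : H.Walk x y) {i j : W}
    (hi : d i = x) (hj : d j = y) :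
    (liftWalk hd hHS hrange w hi hj).edges.map (Sym2.map d) = w.edges := by
  induction w generalizing i j with
  | nil => subst hi; simp [liftWalk]
  | @cons a b c hab w ih =>
    subst hi
    simp only [liftWalk, Walk.edges_cons, List.map_cons]
    rw [ih, Sym2.map_pair_eq, Classical.choose_spec (hrange _ (hHS hab).2)]

lemma liftWalk_length {x y : V} (w : H.Walk x y) {i j : W}
    (hi : d i = x) (hj : d j = y) :
    (liftWalk hd hHS hrange w hi hj).length = w.length := by
  induction w generalizing i j with
  | nil => subst hi; simp [liftWalk]
  | cons hab w ih =>
    subst hi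
    simp only [liftWalk, Walk.length_cons]
    rw [ih]

lemma liftWalk_mem_support {x y : V} (w : H.Walk x y) {i j : W}
    (hi : d i = x) (hj : d j = y) (k : W) :
    k ∈ (liftWalk hd hHS hrange w hi hj).support ↔ d k ∈ w.support := by
  constructor
  · intro hk
    rw [← liftWalk_support hd hHS hrange w hi hj]
    exact List.mem_map_of_mem (f := d) hk
  · intro hk
    rw [← liftWalk_support hd hHS hrange w hi hj] at hk
    obtain ⟨k', hk', hkk⟩ := List.mem_map.1 hk
    exact (hd hkk) ▸ hk'

lemma liftWalk_isPath {x y : V} {w : H.Walk x y} (hw : w.IsPath) {i j : W}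
    (hi : d i = x) (hj : d j = y) :
    (liftWalk hd hHS hrange w hi hj).IsPath := by
  refine ⟨⟨?_⟩, ?_⟩
  · have := hw.isTrail.edges_nodup
    rw [← liftWalk_edges hd hHS hrange w hi hj] at this
    exact this.of_map
  · have := hw.support_nodup
    rw [← liftWalk_support hd hHS hrange w hi hj] at this
    exact this.of_map

lemma liftWalk_isCycle {x : V} {w : H.Walk x x} (hw : w.IsCycle) {i : W}
    (hi : d i = x) :
    (liftWalk hd hHS hrange w hi hi).IsCycle := by
  refine ⟨⟨⟨?_⟩, ?_⟩, ?_⟩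
  · have := hw.isTrail.edges_nodup
    rw [← liftWalk_edges hd hHS hrange w hi hi] at this
    exact this.of_map
  · intro hnil
    have h3 := hw.three_le_length
    have := liftWalk_length hd hHS hrange w hi hi
    rw [hnil] at this
    simp at this
    omega
  · have := hw.support_nodup
    rw [← liftWalk_support hd hHS hrange w hi hi, ← List.map_tail] at this
    exact this.of_map

end Transport

section Planarity

lemma isPlaneEmbedding_anti {G H : SimpleGraph V} {vtx : V → ℝ × ℝ}
    {arc : V → V → ℝ → ℝ × ℝ} (hle : H ≤ G) (he : IsPlaneEmbedding G vtx arc) :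
    IsPlaneEmbedding H vtx arc := by
  constructor
  · exact he.vtx_inj
  · intro u v h; exact he.arc_cont (hle h)
  · intro u v h; exact he.arc_injOn (hle h)
  · intro u v h; exact he.arc_start (hle h)
  · intro u v h; exact he.arc_end (hle h)
  · intro u v h; exact he.arc_symm (hle h)
  · intro u v h; exact he.arc_avoids_vtx (hle h)
  · intro u v u' v' h h'; exact he.arc_disjoint (hle h) (hle h')

lemma isPlanar_anti {G H : SimpleGraph V} (hle : H ≤ G) (hpl : IsPlanarGraph G) :
    IsPlanarGraph H := by
  obtain ⟨vtx, arc, he⟩ := hpl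
  exact ⟨vtx, arc, isPlaneEmbedding_anti hle he⟩

lemma comap_isPlanar {W : Type} {H : SimpleGraph V} {d : W → V}
    (hd : Function.Injective d) (hpl : IsPlanarGraph H) :
    IsPlanarGraph (H.comap d) := by
  obtain ⟨vtx, arc, he⟩ := hpl
  refine ⟨vtx ∘ d, fun i j => arc (d i) (d j), ?_⟩
  constructor
  · exact he.vtx_inj.comp hd
  · exact fun i j h => he.arc_cont h
  · exact fun i j h => he.arc_injOn h
  · exact fun i j h => he.arc_start h
  · exact fun i j h => he.arc_end h
  · exact fun i j h => he.arc_symm h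
  · exact fun i j h w => he.arc_avoids_vtx h (d w)
  · intro u v u' v' h h' hne
    refine he.arc_disjoint h h' ?_
    intro hEq
    apply hne
    apply Sym2.map.injective hd
    rwa [Sym2.map_pair_eq, Sym2.map_pair_eq]

end Planarity

section C5ATransport

variable {W : Type} {H : SimpleGraph V} {d : W → V}
variable (hd : Function.Injective d) {S : Set V}
    (hHS : ∀ ⦃x y : V⦄, H.Adj x y → x ∈ S ∧ y ∈ S)
    (hrange : ∀ x ∈ S, ∃ i : W, d i = x)

include hd hHS hrange

lemma comap_reachable {x y : W} (hr : H.Reachable (d x) (d y)) :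
    (H.comap d).Reachable x y := by
  obtain ⟨w⟩ := hr
  exact ⟨liftWalk hd hHS hrange w rfl rfl⟩

lemma comap_dist_ge {x y : W} (hr : H.Reachable (d x) (d y)) :
    H.dist (d x) (d y) ≤ (H.comap d).dist x y := by
  obtain ⟨w', hw'⟩ := (comap_reachable hd hHS hrange hr).exists_walk_length_eq_dist
  rw [← hw']
  calc H.dist (d x) (d y) ≤ (w'.map (comapHom H d)).length := SimpleGraph.dist_le _
  _ = w'.length := by rw [Walk.length_map]

omit hd hHS hrange in
lemma comap_edge_sets {u : W} (c : (H.comap d).Walk u u) :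
    {e | e ∈ (c.map (comapHom H d)).edges} = Sym2.map d '' {e | e ∈ c.edges} := by
  ext e'
  simp only [Walk.edges_map, List.mem_map, Set.mem_image, Set.mem_setOf_eq]
  constructor
  · rintro ⟨a, ha, rfl⟩; exact ⟨a, ha, rfl⟩
  · rintro ⟨a, ha, rfl⟩; exact ⟨a, ha, rfl⟩

lemma comap_c5a (h5 : Cycles5Apart H) : Cycles5Apart (H.comap d) := by
  intro u v c1 c2 hc1 hc2 hl1 hl2 hne x hx y hy
  have hdinj : Function.Injective (comapHom H d) := hd
  have hc1' : (c1.map (comapHom H d)).IsCycle := hc1.map hdinj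
  have hc2' : (c2.map (comapHom H d)).IsCycle := hc2.map hdinj
  have h3 : 3 ≤ H.dist (d x) (d y) := by
    refine h5 _ _ hc1' hc2' ?_ ?_ ?_ (d x) ?_ (d y) ?_
    · rw [Walk.length_map]; exact hl1
    · rw [Walk.length_map]; exact hl2
    · rw [comap_edge_sets, comap_edge_sets]
      intro hEq
      exact hne (Set.image_injective.mpr (Sym2.map.injective hd) hEq)
    · rw [Walk.support_map]; exact List.mem_map_of_mem hx
    · rw [Walk.support_map]; exact List.mem_map_of_mem hy
  have hr : H.Reachable (d x) (d y) := by
    have hnz : H.dist (d x) (d y) ≠ 0 := by omega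
    exact (SimpleGraph.dist_ne_zero_iff_ne_and_reachable.1 hnz).2
  have := comap_dist_ge hd hHS hrange hr
  omega


end C5ATransport

section Ext

/-- Key consequence of minimality: the precoloring of a good short cycle `Q`
extends to a super IF-coloring on a restriction of `G` missing some vertex. -/
lemma extend_restrict {V : Type} [Fintype V] {G : SimpleGraph V} {v0 : V}
    {C0 : G.Walk v0 v0} {φ0 : V → Bool}
    (hmin : IsMinimalCounterexample G C0 φ0)
    (P B : Set V) (hBP : B ⊆ P)
    (hbp : ∀ ⦃x y : V⦄, G.Adj x y → x ∉ P → y ∈ P → y ∈ B)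
    (hB : ∀ a ∈ B, ∀ b ∈ B, (restrict G P).Reachable a b)
    (w0 : V) (hw0 : w0 ∉ P)
    {q0 : V} (Q : G.Walk q0 q0) (hQgood : IsGoodCycle G Q) (hQlen : Q.length ≤ 9)
    (hQP : ∀ z ∈ Q.support, z ∈ P)
    (φ : V → Bool) (hφ : IFColoringOn (restrict G P) {x | x ∈ Q.support} φ) :
    ∃ c : V → Bool, SuperIFColoring (restrict G P) {x | x ∈ Q.support} c ∧
      ∀ x ∈ Q.support, c x = φ x := by
  classical
  by_contra hcon
  set H := restrict G P with hHdef
  set n := Fintype.card ↥P with hndef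
  set eqv : ↥P ≃ Fin n := Fintype.equivFin ↥P with heqv
  set d : Fin n → V := fun i => ((eqv.symm i : ↥P) : V) with hddef
  have hd : Function.Injective d := fun i j h =>
    eqv.symm.injective (Subtype.coe_injective h)
  have hHS : ∀ ⦃x y : V⦄, H.Adj x y → x ∈ P ∧ y ∈ P := fun x y h => ⟨h.2.1, h.2.2⟩
  have hrange : ∀ x ∈ P, ∃ i, d i = x := fun x hx => ⟨eqv ⟨x, hx⟩, by simp [hddef]⟩
  have hdP : ∀ i, d i ∈ P := fun i => (eqv.symm i).2
  set K := H.comap d with hKdef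
  have hQcyc : Q.IsCycle := hQgood.1
  have hQedges : ∀ e' ∈ Q.edges, e' ∈ H.edgeSet := edges_mem_restrict Q hQP
  set Q' : H.Walk q0 q0 := Q.transfer H hQedges with hQ'def
  have hQ'cyc : Q'.IsCycle := hQcyc.transfer hQedges
  have hq0P : q0 ∈ P := hQP q0 Q.start_mem_support
  obtain ⟨i0, hi0⟩ := hrange q0 hq0P
  set C0'' : K.Walk i0 i0 := liftWalk hd hHS hrange Q' hi0 hi0 with hC0''def
  set c0'' : Fin n → Bool := fun i => φ (d i) with hc0''def
  have hQ'supp : Q'.support = Q.support := Walk.support_transfer _ _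
  have hmemsupp : ∀ k, k ∈ C0''.support ↔ d k ∈ Q.support := fun k => by
    rw [hC0''def, liftWalk_mem_support, hQ'supp]
  have hlen'' : C0''.length = Q.length := by
    rw [hC0''def, liftWalk_length, hQ'def, Walk.length_transfer]
  -- index of a vertex of P
  have hidx : ∀ x (hx : x ∈ P), d (Classical.choose (hrange x hx)) = x :=
    fun x hx => Classical.choose_spec (hrange x hx)
  -- the six components of a counterexample
  have hplanar : IsPlanarGraph K :=
    comap_isPlanar hd (isPlanar_anti (restrict_le G P) hmin.1.1)
  have hc5a : Cycles5Apart K :=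
    comap_c5a hd hHS hrange (c5a_restrict hmin.1.2.1 hbp hB hBP)
  have hgood : IsGoodCycle K C0'' := by
    refine ⟨liftWalk_isCycle hd hHS hrange hQ'cyc hi0, ?_⟩
    rintro ⟨hc'', hlen9, hcl⟩
    apply hQgood.2
    refine ⟨hQcyc, by omega, ?_⟩
    rcases hcl with hclaw | htri
    · left
      obtain ⟨x, hx, a, b, c, ha, hb, hc, hab, hac, hbc, hxa, hxb, hxc⟩ := hclaw
      refine ⟨d x, fun hm => hx ((hmemsupp x).2 hm), d a, d b, d c,
        (hmemsupp a).1 ha, (hmemsupp b).1 hb, (hmemsupp c).1 hc,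
        fun h => hab (hd h), fun h => hac (hd h), fun h => hbc (hd h),
        ?_, ?_, ?_⟩
      · exact (restrict_le G P) hxa
      · exact (restrict_le G P) hxb
      · exact (restrict_le G P) hxc
    · right
      obtain ⟨x, y, z, hx, hy, hz, hxy, hyz, hxz, a, b, c, ha, hb, hc,
        hab, hac, hbc, hxa, hyb, hzc⟩ := htri
      refine ⟨d x, d y, d z, fun hm => hx ((hmemsupp x).2 hm),
        fun hm => hy ((hmemsupp y).2 hm), fun hm => hz ((hmemsupp z).2 hm),
        (restrict_le G P) hxy, (restrict_le G P) hyz, (restrict_le G P) hxz,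
        d a, d b, d c,
        (hmemsupp a).1 ha, (hmemsupp b).1 hb, (hmemsupp c).1 hc,
        fun h => hab (hd h), fun h => hac (hd h), fun h => hbc (hd h),
        (restrict_le G P) hxa, (restrict_le G P) hyb, (restrict_le G P) hzc⟩
  have hlen : C0''.length ≤ 9 := by omega
  have hifcol : IFColoringOn K {x | x ∈ C0''.support} c0'' := by
    constructor
    · intro i j hi hj hadj htrue
      exact hφ.1 ((hmemsupp i).1 hi) ((hmemsupp j).1 hj) hadj htrue
    · intro v w hw hsupp hall
      refine hφ.2 _ (w.map (comapHom H d)) (hw.map hd) ?_ ?_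
      · intro z hz
        rw [Walk.support_map] at hz
        obtain ⟨k, hk, rfl⟩ := List.mem_map.1 hz
        exact (hmemsupp k).1 (hsupp k hk)
      · intro z hz
        rw [Walk.support_map] at hz
        obtain ⟨k, hk, rfl⟩ := List.mem_map.1 hz
        exact hall k hk
  have hnext : ¬ ExtendsToSuper K C0'' c0'' := by
    rintro ⟨c'', ⟨⟨hind'', hforest''⟩, hsplit''⟩, hagree''⟩
    apply hcon
    set c : V → Bool :=
      fun x => if hx : x ∈ P then c'' (Classical.choose (hrange x hx)) else true
      with hcdef
    have hcP : ∀ x (hx : x ∈ P), c x = c'' (Classical.choose (hrange x hx)) :=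
      fun x hx => by rw [hcdef]; exact dif_pos hx
    have hcd : ∀ i, c (d i) = c'' i := fun i => by
      rw [hcP (d i) (hdP i)]
      congr 1
      exact hd (hidx (d i) (hdP i))
    refine ⟨c, ⟨⟨?_, ?_⟩, ?_⟩, ?_⟩
    · -- independence
      intro u v hadj htrue
      have hu := (hHS hadj).1
      have hv := (hHS hadj).2
      have hadjK : K.Adj (Classical.choose (hrange u hu)) (Classical.choose (hrange v hv)) := by
        rw [hKdef, comap_adj', hidx u hu, hidx v hv]
        exact hadj
      have := hind'' hadjK (by rw [← hcP u hu]; exact htrue)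
      rw [hcP v hv]
      exact this
    · -- forest
      intro v w hw hall
      have hv : v ∈ P := restrict_cycle_support hw v w.start_mem_support
      refine hforest'' _ (liftWalk hd hHS hrange w (hidx v hv) (hidx v hv))
        (liftWalk_isCycle hd hHS hrange hw _) ?_
      intro k hk
      rw [← hcd k]
      exact hall (d k) ((liftWalk_mem_support hd hHS hrange w _ _ k).1 hk)
    · -- no splitting F-path
      rintro a b p ⟨hpath, hF, haQ, hbQ, hplen, hint⟩
      have haP : a ∈ P := hQP a haQ
      have hbP : b ∈ P := hQP b hbQ
      refine hsplit'' _ _ (liftWalk hd hHS hrange p (hidx a haP) (hidx b hbP))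
        ⟨liftWalk_isPath hd hHS hrange hpath _ _, ?_, ?_, ?_, ?_, ?_⟩
      · intro k hk
        rw [← hcd k]
        exact hF (d k) ((liftWalk_mem_support hd hHS hrange p _ _ k).1 hk)
      · exact (hmemsupp _).2 (by rw [hidx a haP]; exact haQ)
      · exact (hmemsupp _).2 (by rw [hidx b hbP]; exact hbQ)
      · rw [liftWalk_length]; exact hplen
      · intro k hk hka hkb hkQ
        have hdk : d k ∈ p.support := (liftWalk_mem_support hd hHS hrange p _ _ k).1 hk
        have h1 : d k ≠ a := fun h => hka (hd (h.trans (hidx a haP).symm))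
        have h2 : d k ≠ b := fun h => hkb (hd (h.trans (hidx b hbP).symm))
        exact hint (d k) hdk h1 h2 ((hmemsupp k).1 hkQ)
    · -- agreement
      intro x hx
      have hxP : x ∈ P := hQP x hx
      rw [hcP x hxP, hagree'' _ ((hmemsupp _).2 (by rw [hidx x hxP]; exact hx))]
      rw [hc0''def]
      simp only
      rw [hidx x hxP]
  have hctr : IsCounterexample K C0'' c0'' :=
    ⟨hplanar, hc5a, hgood, hlen, hifcol, hnext⟩
  have hle := hmin.2 n K i0 C0'' c0'' hctr
  -- size comparison
  have hEdge : H.edgeSet = Sym2.map d '' K.edgeSet := by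
    ext e'
    constructor
    · intro he'
      induction e' using Sym2.ind with
      | _ a b =>
        obtain ⟨i, hi⟩ := hrange a (hHS he').1
        obtain ⟨j, hj⟩ := hrange b (hHS he').2
        refine ⟨s(i, j), ?_, by rw [Sym2.map_pair_eq, hi, hj]⟩
        show K.Adj i j
        rw [hKdef, comap_adj', hi, hj]
        exact he'
    · rintro ⟨e'', he'', rfl⟩
      induction e'' using Sym2.ind with
      | _ i j =>
        rw [Sym2.map_pair_eq]
        exact he''
  have hcard1 : K.edgeSet.ncard = H.edgeSet.ncard := by
    rw [hEdge, Set.ncard_image_of_injective _ (Sym2.map.injective hd)]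
  have hcard2 : H.edgeSet.ncard ≤ G.edgeSet.ncard :=
    Set.ncard_le_ncard (fun e' he' => mem_restrict_edgeSet he') (Set.toFinite _)
  have hnlt : n < Fintype.card V := by
    rw [hndef]
    exact Fintype.card_subtype_lt (x := w0) hw0
  have hsize : graphSize K < graphSize G := by
    unfold graphSize
    rw [Fintype.card_fin]
    omega
  unfold graphSize at hle hsize
  omega

end Ext

section Surgery

variable [DecidableEq V] {G : SimpleGraph V}

lemma mem_support_tail_of_closed {v : V} (w : G.Walk v v) (h : w.length ≠ 0)
    {x : V} (hx : x ∈ w.support) : x ∈ w.support.tail := by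
  cases w with
  | nil => simp at h
  | cons hadj q =>
    rw [Walk.support_cons, List.mem_cons] at hx
    rw [Walk.support_cons, List.tail_cons]
    rcases hx with rfl | hx
    · exact q.end_mem_support
    · exact hx

lemma rotate_length {v t : V} (w : G.Walk v v) (ht : t ∈ w.support) :
    (w.rotate t ht).length = w.length := by
  have h1 : (w.rotate t ht).edges.length = w.edges.length :=
    (Walk.rotate_edges w t ht).perm.length_eq
  rwa [Walk.length_edges, Walk.length_edges] at h1

lemma rotate_mem_support {v t : V} {w : G.Walk v v} (hlen : w.length ≠ 0)
    (ht : t ∈ w.support) {z : V} :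
    z ∈ (w.rotate t ht).support ↔ z ∈ w.support := by
  have hlen' : (w.rotate t ht).length ≠ 0 := by rw [rotate_length]; exact hlen
  have hperm := Walk.support_rotate w t ht
  constructor
  · intro h
    exact List.mem_of_mem_tail
      (hperm.mem_iff.1 (mem_support_tail_of_closed _ hlen' h))
  · intro h
    exact List.mem_of_mem_tail
      (hperm.mem_iff.2 (mem_support_tail_of_closed _ hlen h))

/-- Extract the final excursion into `A` of a walk ending in `A`. -/
lemma surg {A B : Set V}
    (hAB : ∀ ⦃x y : V⦄, G.Adj x y → y ∈ A → x ∉ A → x ∈ B) :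
    ∀ {x s : V} (q : G.Walk x s), s ∈ A →
      (∀ z ∈ q.support, z ∈ A) ∨
      ∃ (a : V) (r : G.Walk a s) (pre : G.Walk x a),
        pre.append r = q ∧ a ∈ B ∧ (∀ z ∈ r.support.tail, z ∈ A) ∧ 1 ≤ r.length := by
  intro x s q
  induction q with
  | nil =>
    intro hs
    left
    intro z hz
    rw [Walk.support_nil, List.mem_singleton] at hz
    exact hz ▸ hs
  | @cons a b c h q ih =>
    intro hs
    rcases ih hs with hin | ⟨a', r, pre, happ, haB, htail, hlen⟩
    · by_cases hxA : a ∈ A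
      · left
        intro z hz
        rw [Walk.support_cons, List.mem_cons] at hz
        rcases hz with rfl | hz
        · exact hxA
        · exact hin z hz
      · right
        have hbA : b ∈ A := hin b q.start_mem_support
        exact ⟨a, Walk.cons h q, Walk.nil, Walk.nil_append _, hAB h hbA hxA,
          by rw [Walk.support_cons, List.tail_cons]; exact hin, by simp⟩
    · right
      exact ⟨a', r, Walk.cons h pre, by rw [Walk.cons_append, happ], haB, htail, hlen⟩

/-- Splitting a cycle at a non-base point gives two paths meeting only
at the two special vertices. -/
lemma cycle_split {t : V} {W' : G.Walk t t} (hW : W'.IsCycle)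
    {s : V} (hs : s ∈ W'.support) (hst : s ≠ t) :
    (W'.takeUntil s hs).IsPath ∧ (W'.dropUntil s hs).IsPath ∧
      (∀ x, x ∈ (W'.takeUntil s hs).support → x ∈ (W'.dropUntil s hs).support →
        x = t ∨ x = s) := by
  set p1 := W'.takeUntil s hs with hp1
  set p2 := W'.dropUntil s hs with hp2
  have h1 : p1.append p2 = W' := W'.take_spec hs
  have h2 : p1.support ++ p2.support.tail = W'.support := by
    rw [← Walk.support_append, h1]
  have h3 : p1.support = t :: p1.support.tail := p1.support_eq_cons
  have h4 : W'.support = t :: W'.support.tail := W'.support_eq_cons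
  have htl : p1.support.tail ++ p2.support.tail = W'.support.tail := by
    have := h2
    rw [h3, h4, List.cons_append] at this
    exact List.tail_eq_of_cons_eq this
  have hnd : (p1.support.tail ++ p2.support.tail).Nodup := by
    rw [htl]; exact hW.support_nodup
  rw [List.nodup_append] at hnd
  obtain ⟨hnd1, hnd2, hdisj⟩ := hnd
  have hp2cons : p2.support = s :: p2.support.tail := p2.support_eq_cons
  have htmem : t ∈ p2.support.tail := by
    have := p2.end_mem_support
    rw [hp2cons, List.mem_cons] at this
    rcases this with h | h
    · exact absurd h.symm hst
    · exact h
  have hsmem : s ∈ p1.support.tail := by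
    have := p1.end_mem_support
    rw [h3, List.mem_cons] at this
    rcases this with h | h
    · exact absurd h hst
    · exact h
  refine ⟨Walk.IsPath.mk' ?_, Walk.IsPath.mk' ?_, ?_⟩
  · rw [h3, List.nodup_cons]
    exact ⟨fun ht' => hdisj t ht' t htmem rfl, hnd1⟩
  · rw [hp2cons, List.nodup_cons]
    exact ⟨fun hs' => hdisj s hsmem s hs' rfl, hnd2⟩
  · intro x hx1 hx2
    by_cases hxt : x = t
    · exact Or.inl hxt
    · by_cases hxs : x = s
      · exact Or.inr hxs
      · exfalso
        rw [h3, List.mem_cons] at hx1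
        rcases hx1 with rfl | hx1
        · exact hxt rfl
        rw [hp2cons, List.mem_cons] at hx2
        rcases hx2 with rfl | hx2
        · exact hxs rfl
        exact hdisj x hx1 x hx2 rfl

/-- Glue two excursions into a splitting F-path. -/
lemma splice {IntS In Cs : Set V}
    (hInInt : ∀ z ∈ In, z ∈ IntS) (hCsInt : ∀ z ∈ Cs, z ∈ IntS)
    (hInCs : ∀ z ∈ In, z ∉ Cs)
    (χ : V → Bool)
    {a1 a2 s : V} (r1 : G.Walk a1 s) (r2 : G.Walk a2 s)
    (h1 : r1.IsPath) (h2 : r2.IsPath)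
    (ht1 : ∀ z ∈ r1.support.tail, z ∈ In) (ht2 : ∀ z ∈ r2.support.tail, z ∈ In)
    (ha1 : a1 ∈ Cs) (ha2 : a2 ∈ Cs)
    (hdisj : ∀ z, z ∈ r1.support → z ∈ r2.support → z = s)
    (hl1 : 1 ≤ r1.length) (hl2 : 1 ≤ r2.length)
    (hcol : ∀ z, z ∈ r1.support ∨ z ∈ r2.support → χ z = false) :
    ∃ (pr : (restrict G IntS).Walk a1 a2),
      IsSplittingFPath (restrict G IntS) Cs χ pr := by
  set P := r1.append r2.reverse with hPdef
  have hsup1 : ∀ z ∈ r1.support, z ∈ IntS := by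
    intro z hz
    rw [r1.support_eq_cons, List.mem_cons] at hz
    rcases hz with rfl | hz
    · exact hCsInt _ ha1
    · exact hInInt _ (ht1 z hz)
  have hsup2 : ∀ z ∈ r2.support, z ∈ IntS := by
    intro z hz
    rw [r2.support_eq_cons, List.mem_cons] at hz
    rcases hz with rfl | hz
    · exact hCsInt _ ha2
    · exact hInInt _ (ht2 z hz)
  have hPsup : ∀ z ∈ P.support, z ∈ r1.support ∨ z ∈ r2.support := by
    intro z hz
    rw [hPdef, Walk.mem_support_append_iff] at hz
    rcases hz with hz | hz
    · exact Or.inl hz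
    · right; rwa [Walk.support_reverse, List.mem_reverse] at hz
  have hPInt : ∀ z ∈ P.support, z ∈ IntS := by
    intro z hz
    rcases hPsup z hz with hz | hz
    · exact hsup1 z hz
    · exact hsup2 z hz
  have hPpath : P.IsPath := by
    apply Walk.IsPath.mk'
    rw [hPdef, Walk.support_append, List.nodup_append]
    refine ⟨h1.support_nodup, ?_, ?_⟩
    · exact h2.reverse.support_nodup.tail
    · intro z hz1 z' hz2 hzz
      subst z'
      have hz2' : z ∈ r2.reverse.support := List.mem_of_mem_tail hz2
      have hzr2 : z ∈ r2.support := by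
        rwa [Walk.support_reverse, List.mem_reverse] at hz2'
      have hzs : z = s := hdisj z hz1 hzr2
      subst hzs
      have : r2.reverse.support = z :: r2.reverse.support.tail :=
        r2.reverse.support_eq_cons
      have hnd := h2.reverse.support_nodup
      rw [this, List.nodup_cons] at hnd
      exact hnd.1 hz2
  set Pr := P.transfer (restrict G IntS) (edges_mem_restrict P hPInt) with hPr
  refine ⟨Pr, ⟨?_, ?_, ha1, ha2, ?_, ?_⟩⟩
  · exact hPpath.transfer _
  · intro z hz
    rw [hPr, Walk.support_transfer] at hz
    exact hcol z (hPsup z hz)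
  · rw [hPr, Walk.length_transfer, hPdef, Walk.length_append, Walk.length_reverse]
    omega
  · intro z hz hza1 hza2 hzCs
    rw [hPr, Walk.support_transfer] at hz
    rcases hPsup z hz with hz' | hz'
    · rw [r1.support_eq_cons, List.mem_cons] at hz'
      rcases hz' with rfl | hz'
      · exact hza1 rfl
      · exact hInCs z (ht1 z hz') hzCs
    · rw [r2.support_eq_cons, List.mem_cons] at hz'
      rcases hz' with rfl | hz'
      · exact hza2 rfl
      · exact hInCs z (ht2 z hz') hzCs

end Surgery
/-- A minimal counterexample `(G, C0, φ0)` to the extension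
theorem, embedded in the plane so that the chordless cycle `C0` bounds the
outer face, contains no separating good cycle of length at most `9`. -/
theorem no_separating_good_cycle {V : Type} [Fintype V] (G : SimpleGraph V)
    {v0 : V} (C0 : G.Walk v0 v0) (φ0 : V → Bool)
    (hmin : IsMinimalCounterexample G C0 φ0)
    (vtx : V → ℝ × ℝ) (arc : V → V → ℝ → ℝ × ℝ)
    (hemb : IsPlaneEmbedding G vtx arc)
    (hchordless : Chordless G C0)
    (D : Set (ℝ × ℝ)) (hD : IsOuterFace G vtx arc D)
    (hbound : frontier D = WalkDrawing G arc C0) :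
    ∀ (a : V) (C : G.Walk a a), C.IsCycle → C.length ≤ 9 →
      ¬ IsBadCycle G C → ¬ IsSeparatingCycle G vtx arc C := by
  classical
  intro a C hCcyc hClen hCbad hsep
  obtain ⟨⟨vin, hvin⟩, uout, huout⟩ := hsep
  obtain ⟨hpl, hc5, hgood0, hlen0, hifc0, hnext0⟩ := hmin.1
  have hC0cyc : C0.IsCycle := hgood0.1
  have hC0len : C0.length ≠ 0 := by have := hC0cyc.three_le_length; omega
  have hClen0 : C.length ≠ 0 := by have := hCcyc.three_le_length; omega
  set In : Set V := {w | VertexInsideCycle G vtx arc C w} with hIn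
  set ExtS : Set V := {w | w ∉ In} with hExtS
  set IntS : Set V := {w | w ∈ In ∨ w ∈ C.support} with hIntS
  set Cs : Set V := {w | w ∈ C.support} with hCs
  have hInC : ∀ x ∈ In, x ∉ Cs := by
    intro x hx hxC
    exact hx.1 (vtx_mem_walkDrawing_of_mem_support hemb hClen0 hxC)
  have hadjIn : ∀ ⦃x y : V⦄, G.Adj x y → x ∈ In → y ∈ In ∨ y ∈ Cs :=
    fun x y hxy hx => inside_adj hemb hClen0 hxy hx
  have hABsurg : ∀ ⦃x y : V⦄, G.Adj x y → y ∈ In → x ∉ In → x ∈ Cs := by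
    intro x y hxy hy hx
    rcases hadjIn hxy.symm hy with h | h
    · exact absurd h hx
    · exact h
  have hCsE : ∀ z ∈ Cs, z ∈ ExtS := fun z hz hzIn => hInC z hzIn hz
  have hCsI : ∀ z ∈ Cs, z ∈ IntS := fun z hz => Or.inr hz
  have hbpE : ∀ ⦃x y : V⦄, G.Adj x y → x ∉ ExtS → y ∈ ExtS → y ∈ Cs := by
    intro x y hxy hx hy
    have hxIn : x ∈ In := not_not.1 hx
    rcases hadjIn hxy hxIn with h | h
    · exact absurd h hy
    · exact h
  have hbpI : ∀ ⦃x y : V⦄, G.Adj x y → x ∉ IntS → y ∈ IntS → y ∈ Cs := by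
    intro x y hxy hx hy
    rcases hy with hyIn | hyC
    · rcases hadjIn hxy.symm hyIn with h | h
      · exact absurd (Or.inl h) hx
      · exact absurd (Or.inr h) hx
    · exact hyC
  have hBreach : ∀ (P : Set V), (∀ z ∈ C.support, z ∈ P) →
      ∀ a' ∈ Cs, ∀ b' ∈ Cs, (restrict G P).Reachable a' b' := by
    intro P hP x hx y hy
    have hx' : x ∈ (C.transfer (restrict G P) (edges_mem_restrict C hP)).support := by
      rw [Walk.support_transfer]; exact hx
    have hy' : y ∈ (C.transfer (restrict G P) (edges_mem_restrict C hP)).support := by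
      rw [Walk.support_transfer]; exact hy
    exact reachable_of_mem_support hx' hy'
  have hC0E : ∀ z ∈ C0.support, z ∈ ExtS :=
    fun z hz hzIn => c0_not_inside hemb hC0len hD hbound C z hz hzIn
  have hvinE : vin ∉ ExtS := fun h => h hvin
  have huoutI : uout ∉ IntS := by
    rintro (h | h)
    · exact huout.2 h.2
    · exact huout.1 (vtx_mem_walkDrawing_of_mem_support hemb hClen0 h)
  -- coloring of the outside part
  have hifcE : IFColoringOn (restrict G ExtS) {x | x ∈ C0.support} φ0 := by
    constructor
    · intro u v hu hv hadj ht
      exact hifc0.1 hu hv ((restrict_le G ExtS) hadj) ht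
    · intro v w hw hsupp hall
      refine hifc0.2 v (w.mapLe (restrict_le G ExtS)) (hw.mapLe _) ?_ ?_
      · rwa [mapLe_support]
      · rwa [mapLe_support]
  obtain ⟨ψ, hψsuper, hψagree⟩ := extend_restrict hmin ExtS Cs hCsE hbpE
    (hBreach ExtS hCsE) vin hvinE C0 hgood0 hlen0 (fun z hz => hC0E z hz) φ0 hifcE
  have hψIF : IFColoring (restrict G ExtS) ψ := hψsuper.1
  have hψsplit := hψsuper.2
  -- coloring on C for the inside part
  have hifcI : IFColoringOn (restrict G IntS) {x | x ∈ C.support} ψ := by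
    constructor
    · intro u v hu hv hadj ht
      exact hψIF.1 ⟨hadj.1, hCsE u hu, hCsE v hv⟩ ht
    · intro v w hw hsupp hall
      have hwsup : ∀ z ∈ (w.mapLe (restrict_le G IntS)).support, z ∈ ExtS := by
        rw [mapLe_support]; exact fun z hz => hCsE z (hsupp z hz)
      refine hψIF.2 v ((w.mapLe (restrict_le G IntS)).transfer (restrict G ExtS)
        (edges_mem_restrict _ hwsup)) ((hw.mapLe _).transfer _) ?_
      rw [Walk.support_transfer, mapLe_support]
      exact hall
  obtain ⟨χ, hχsuper, hχagree⟩ := extend_restrict hmin IntS Cs hCsI hbpI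
    (hBreach IntS hCsI) uout huoutI C ⟨hCcyc, hCbad⟩ hClen
    (fun z hz => Or.inr hz) ψ hifcI
  have hχIF : IFColoring (restrict G IntS) χ := hχsuper.1
  -- combined coloring
  set c : V → Bool := fun x => if x ∈ In then χ x else ψ x with hcdef
  have hcIn : ∀ x ∈ In, c x = χ x := fun x hx => if_pos hx
  have hcE : ∀ x, x ∉ In → c x = ψ x := fun x hx => if_neg hx
  have hCnotIn : ∀ x ∈ Cs, x ∉ In := fun x hx hxIn => hInC x hxIn hx
  have hcC : ∀ x ∈ Cs, c x = χ x := by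
    intro x hx
    rw [hcE x (hCnotIn x hx)]
    exact (hχagree x hx).symm
  apply hnext0
  refine ⟨c, ⟨⟨?_, ?_⟩, ?_⟩, ?_⟩
  · -- independence
    intro u v hadj htrue
    by_cases hu : u ∈ In
    · rcases hadjIn hadj hu with hv | hv
      · have := hχIF.1 ⟨hadj, Or.inl hu, Or.inl hv⟩ (by rwa [← hcIn u hu])
        rwa [hcIn v hv]
      · have := hχIF.1 ⟨hadj, Or.inl hu, Or.inr hv⟩ (by rwa [← hcIn u hu])
        rwa [hcC v hv]
    · by_cases hv : v ∈ In
      · have huC : u ∈ Cs := hABsurg hadj hv hu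
        have := hχIF.1 ⟨hadj, Or.inr huC, Or.inl hv⟩ (by rwa [← hcC u huC])
        rwa [hcIn v hv]
      · have := hψIF.1 ⟨hadj, hu, hv⟩ (by rwa [← hcE u hu])
        rwa [hcE v hv]
  · -- forest
    intro v w hw hall
    by_cases hwi : ∀ z ∈ w.support, z ∉ In
    · have hsub : ∀ z ∈ w.support, z ∈ ExtS := fun z hz => hwi z hz
      refine hψIF.2 v (w.transfer (restrict G ExtS) (edges_mem_restrict w hsub))
        (hw.transfer _) ?_
      rw [Walk.support_transfer]
      intro z hz
      rw [← hcE z (hwi z hz)]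
      exact hall z hz
    · push_neg at hwi
      obtain ⟨s, hsw, hsIn⟩ := hwi
      by_cases hwI : ∀ z ∈ w.support, z ∈ IntS
      · have hcall : ∀ z ∈ w.support, χ z = false := by
          intro z hz
          rcases hwI z hz with hzIn | hzC
          · rw [← hcIn z hzIn]; exact hall z hz
          · rw [← hcC z hzC]; exact hall z hz
        exact hχIF.2 v (w.transfer (restrict G IntS) (edges_mem_restrict w hwI))
          (hw.transfer _) (by rw [Walk.support_transfer]; exact hcall)
      · push_neg at hwI
        obtain ⟨t, htw, htI⟩ := hwI
        have htIn : t ∉ In := fun h => htI (Or.inl h)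
        have htC : t ∉ Cs := fun h => htI (Or.inr h)
        have hwlen : w.length ≠ 0 := by have := hw.three_le_length; omega
        set W' := w.rotate t htw with hW'def
        have hW'cyc : W'.IsCycle := hw.rotate htw
        have hmemW' : ∀ z : V, z ∈ W'.support ↔ z ∈ w.support :=
          fun z => rotate_mem_support hwlen htw
        have hsW' : s ∈ W'.support := (hmemW' s).2 hsw
        have hst : s ≠ t := fun h => htIn (h ▸ hsIn)
        obtain ⟨hp1path, hp2path, hinter⟩ := cycle_split hW'cyc hsW' hst
        set p1 := W'.takeUntil s hsW' with hp1def
        set p2 := W'.dropUntil s hsW' with hp2def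
        rcases surg hABsurg p1 hsIn with hleft | ⟨a1, r1, pre1, happ1, ha1, ht1, hl1⟩
        · exact htIn (hleft t p1.start_mem_support)
        rcases surg hABsurg p2.reverse hsIn with hleft | ⟨a2, r2, pre2, happ2, ha2, ht2, hl2⟩
        · exact htIn (hleft t p2.reverse.start_mem_support)
        have hr1sub : ∀ z ∈ r1.support, z ∈ p1.support := by
          intro z hz
          rw [← happ1, Walk.mem_support_append_iff]
          exact Or.inr hz
        have hr2sub : ∀ z ∈ r2.support, z ∈ p2.support := by
          intro z hz
          have hzr : z ∈ p2.reverse.support := by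
            rw [← happ2, Walk.mem_support_append_iff]; exact Or.inr hz
          rwa [Walk.support_reverse, List.mem_reverse] at hzr
        have hr1path : r1.IsPath :=
          Walk.IsPath.of_append_right (by rw [happ1]; exact hp1path)
        have hr2path : r2.IsPath :=
          Walk.IsPath.of_append_right (by rw [happ2]; exact hp2path.reverse)
        have hdisj12 : ∀ z, z ∈ r1.support → z ∈ r2.support → z = s := by
          intro z h1 h2
          rcases hinter z (hr1sub z h1) (hr2sub z h2) with rfl | rfl
          · exfalso
            rw [r1.support_eq_cons, List.mem_cons] at h1
            rcases h1 with h1 | h1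
            · exact htC (by rw [h1]; exact ha1)
            · exact htIn (ht1 _ h1)
          · rfl
        have hcolr : ∀ z, z ∈ r1.support ∨ z ∈ r2.support → χ z = false := by
          intro z hz
          have hzw : z ∈ w.support := by
            rcases hz with hz | hz
            · exact (hmemW' z).1 (Walk.support_takeUntil_subset _ _ (hr1sub z hz))
            · exact (hmemW' z).1 (Walk.support_dropUntil_subset _ _ (hr2sub z hz))
          have hcz : c z = false := hall z hzw
          by_cases hzIn : z ∈ In
          · rw [← hcIn z hzIn]; exact hcz
          · have hzC : z ∈ Cs := by
              rcases hz with hz | hz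
              · rw [r1.support_eq_cons, List.mem_cons] at hz
                rcases hz with rfl | hz
                · exact ha1
                · exact absurd (ht1 _ hz) hzIn
              · rw [r2.support_eq_cons, List.mem_cons] at hz
                rcases hz with rfl | hz
                · exact ha2
                · exact absurd (ht2 _ hz) hzIn
            rw [← hcC z hzC]; exact hcz
        obtain ⟨pr, hpr⟩ := splice (fun z hz => Or.inl hz) (fun z hz => Or.inr hz)
          hInC χ r1 r2 hr1path hr2path ht1 ht2 ha1 ha2 hdisj12 hl1 hl2 hcolr
        exact hχsuper.2 a1 a2 pr hpr
  · -- no splitting F-path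
    rintro a' b' p ⟨hpath, hF, haQ, hbQ, hplen, hintl⟩
    by_cases hpi : ∀ z ∈ p.support, z ∉ In
    · have hsub : ∀ z ∈ p.support, z ∈ ExtS := fun z hz => hpi z hz
      refine hψsplit a' b' (p.transfer (restrict G ExtS) (edges_mem_restrict p hsub))
        ⟨hpath.transfer _, ?_, haQ, hbQ, ?_, ?_⟩
      · rw [Walk.support_transfer]
        intro z hz
        rw [← hcE z (hpi z hz)]
        exact hF z hz
      · rw [Walk.length_transfer]; exact hplen
      · rw [Walk.support_transfer]; exact hintl
    · push_neg at hpi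
      obtain ⟨s, hsp, hsIn⟩ := hpi
      have haE : a' ∉ In := hC0E a' haQ
      have hbE : b' ∉ In := hC0E b' hbQ
      set p1 := p.takeUntil s hsp with hp1def
      set p2 := p.dropUntil s hsp with hp2def
      have hp1path : p1.IsPath := hpath.takeUntil hsp
      have hp2path : p2.IsPath := hpath.dropUntil hsp
      have h2 : p1.support ++ p2.support.tail = p.support := by
        rw [← Walk.support_append, p.take_spec hsp]
      have hnd : (p1.support ++ p2.support.tail).Nodup := by
        rw [h2]; exact hpath.support_nodup
      rw [List.nodup_append] at hnd
      rcases surg hABsurg p1 hsIn with hleft | ⟨a1, r1, pre1, happ1, ha1, ht1, hl1⟩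
      · exact haE (hleft a' p1.start_mem_support)
      rcases surg hABsurg p2.reverse hsIn with hleft | ⟨a2, r2, pre2, happ2, ha2, ht2, hl2⟩
      · exact hbE (hleft b' p2.reverse.start_mem_support)
      have hr1sub : ∀ z ∈ r1.support, z ∈ p1.support := by
        intro z hz
        rw [← happ1, Walk.mem_support_append_iff]
        exact Or.inr hz
      have hr2sub : ∀ z ∈ r2.support, z ∈ p2.support := by
        intro z hz
        have hzr : z ∈ p2.reverse.support := by
          rw [← happ2, Walk.mem_support_append_iff]; exact Or.inr hz
        rwa [Walk.support_reverse, List.mem_reverse] at hzr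
      have hr1path : r1.IsPath :=
        Walk.IsPath.of_append_right (by rw [happ1]; exact hp1path)
      have hr2path : r2.IsPath :=
        Walk.IsPath.of_append_right (by rw [happ2]; exact hp2path.reverse)
      have hdisj12 : ∀ z, z ∈ r1.support → z ∈ r2.support → z = s := by
        intro z h1 h2'
        have h1' := hr1sub z h1
        have h2'' := hr2sub z h2'
        rw [p2.support_eq_cons, List.mem_cons] at h2''
        rcases h2'' with rfl | h2''
        · rfl
        · exact (hnd.2.2 z h1' z h2'' rfl).elim
      have hcolr : ∀ z, z ∈ r1.support ∨ z ∈ r2.support → χ z = false := by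
        intro z hz
        have hzp : z ∈ p.support := by
          rcases hz with hz | hz
          · exact Walk.support_takeUntil_subset _ _ (hr1sub z hz)
          · exact Walk.support_dropUntil_subset _ _ (hr2sub z hz)
        have hcz : c z = false := hF z hzp
        by_cases hzIn : z ∈ In
        · rw [← hcIn z hzIn]; exact hcz
        · have hzC : z ∈ Cs := by
            rcases hz with hz | hz
            · rw [r1.support_eq_cons, List.mem_cons] at hz
              rcases hz with rfl | hz
              · exact ha1
              · exact absurd (ht1 _ hz) hzIn
            · rw [r2.support_eq_cons, List.mem_cons] at hz
              rcases hz with rfl | hz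
              · exact ha2
              · exact absurd (ht2 _ hz) hzIn
          rw [← hcC z hzC]; exact hcz
      obtain ⟨pr, hpr⟩ := splice (fun z hz => Or.inl hz) (fun z hz => Or.inr hz)
        hInC χ r1 r2 hr1path hr2path ht1 ht2 ha1 ha2 hdisj12 hl1 hl2 hcolr
      exact hχsuper.2 a1 a2 pr hpr
  · -- agreement with the precoloring
    intro x hx
    rw [hcE x (hC0E x hx)]
    exact hψagree x hx

end IFPaper
end
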